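/- arXiv:2305.00276 — 3 statements merged into one kernel-verified Lean document; each statement's English description precedes it below -/
import Mathlib

section
/- Let Γ be a semicomplete weakly distance-regular digraph of diameter d and girth g that is not an undirected graph (i.e., A(Γ) is not symmetric). Then d=2, g≤3, and ∂̃(Γ)={(0,0),(1,2),(2,1)} or ∂̃(Γ)={(0,0),(1,1),(1,2),(2,1)}. -/
namespace Paper

/-- A digraph: a set of vertices together with a set of arcs (ordered pairs of
distinct vertices). -/
structure Digraph (V : Type*) where
  Adj : V → V → Prop
  loopless : ∀ v : V, ¬ Adj v v

variable {V V' : Type*}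

namespace Digraph

/-- There is a directed walk of length `n` from `x` to `y`. -/
def HasPath (G : Digraph V) (x y : V) (n : ℕ) : Prop :=
  ∃ f : ℕ → V, f 0 = x ∧ f n = y ∧ ∀ k < n, G.Adj (f k) (f (k + 1))

/-- The distance `∂(x,y)`: the length of a shortest directed path from `x` to `y`. -/
noncomputable def dist (G : Digraph V) (x y : V) : ℕ :=
  sInf {n | G.HasPath x y n}

/-- The two-way distance `∂̃(x,y) = (∂(x,y), ∂(y,x))`. -/
noncomputable def tdist (G : Digraph V) (x y : V) : ℕ × ℕ :=
  (G.dist x y, G.dist y x)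

/-- The two-way distance set `∂̃(Γ)`. -/
def tdSet (G : Digraph V) : Set (ℕ × ℕ) :=
  {p | ∃ x y : V, G.tdist x y = p}

def StronglyConnected (G : Digraph V) : Prop :=
  ∀ x y : V, ∃ n, G.HasPath x y n

/-- `P_{ĩ,j̃}(x,y)`: the set of `z` with `∂̃(x,z) = ĩ` and `∂̃(z,y) = j̃`. -/
def P (G : Digraph V) (i j : ℕ × ℕ) (x y : V) : Set V :=
  {z | G.tdist x z = i ∧ G.tdist z y = j}

open Classical in
/-- The intersection number `p^{h̃}_{ĩ,j̃}`, defined using an arbitrarily chosen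
pair at two-way distance `h̃` (and `0` if there is no such pair). -/
noncomputable def p (G : Digraph V) (h i j : ℕ × ℕ) : ℕ :=
  if hh : ∃ xy : V × V, G.tdist xy.1 xy.2 = h then
    Nat.card (G.P i j hh.choose.1 hh.choose.2)
  else 0

/-- A weakly distance-regular digraph: strongly connected, and
`|P_{ĩ,j̃}(x,y)|` depends only on `∂̃(x,y)`, `ĩ` and `j̃`. -/
def IsWDR (G : Digraph V) : Prop :=
  G.StronglyConnected ∧
    ∀ (i j : ℕ × ℕ) (x y : V), Nat.card (G.P i j x y) = G.p (G.tdist x y) i j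

/-- Commutativity: `p^{h̃}_{ĩ,j̃} = p^{h̃}_{j̃,ĩ}` for all `h̃,ĩ,j̃ ∈ ∂̃(Γ)`. -/
def IsCommutative (G : Digraph V) : Prop :=
  ∀ h i j : ℕ × ℕ, h ∈ G.tdSet → i ∈ G.tdSet → j ∈ G.tdSet → G.p h i j = G.p h j i

/-- `Γ` is an undirected graph, i.e. its arc set is symmetric. -/
def IsUndirected (G : Digraph V) : Prop :=
  ∀ x y : V, G.Adj x y → G.Adj y x

def IsSemicomplete (G : Digraph V) : Prop :=
  ∀ x y : V, x ≠ y → (G.Adj x y ∨ G.Adj y x)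

/-- `Γ` is a complete (undirected) graph. -/
def IsCompleteDigraph (G : Digraph V) : Prop :=
  ∀ x y : V, x ≠ y → (G.Adj x y ∧ G.Adj y x)

/-- The underlying graph of a digraph. -/
def underlying (G : Digraph V) : SimpleGraph V where
  Adj x y := G.Adj x y ∨ G.Adj y x
  symm := ⟨fun _ _ h => h.symm⟩
  loopless := ⟨fun x h => h.elim (G.loopless x) (G.loopless x)⟩

/-- The diameter: the maximum value of the distance function. -/
noncomputable def diameter (G : Digraph V) : ℕ :=
  sSup {n | ∃ x y : V, G.dist x y = n}

/-- The girth: the length of a shortest circuit. -/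
noncomputable def girth (G : Digraph V) : ℕ :=
  sInf {n | 0 < n ∧ ∃ x : V, G.HasPath x x n}

/-- Number of out-neighbours `d⁺(x)`. -/
noncomputable def outDeg (G : Digraph V) (x : V) : ℕ := Nat.card {y | G.Adj x y}

/-- Number of in-neighbours `d⁻(x)`. -/
noncomputable def inDeg (G : Digraph V) (x : V) : ℕ := Nat.card {y | G.Adj y x}

def IsIsomorphicTo (G : Digraph V) (G' : Digraph V') : Prop :=
  ∃ e : V ≃ V', ∀ x y : V, G.Adj x y ↔ G'.Adj (e x) (e y)

/-- The Cartesian product of two digraphs. -/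
def box (G : Digraph V) (G' : Digraph V') : Digraph (V × V') where
  Adj x y := (x.1 = y.1 ∧ G'.Adj x.2 y.2) ∨ (G.Adj x.1 y.1 ∧ x.2 = y.2)
  loopless := fun v h => h.elim (fun h' => G'.loopless v.2 h'.2) (fun h' => G.loopless v.1 h'.1)

/-- Two digraphs have the same intersection numbers. -/
def SameIntersectionNumbers (G : Digraph V) (G' : Digraph V') : Prop :=
  G.tdSet = G'.tdSet ∧
    ∀ h i j : ℕ × ℕ, h ∈ G.tdSet → i ∈ G.tdSet → j ∈ G.tdSet → G.p h i j = G'.p h i j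

/-- Induced subdigraph on a set of vertices. -/
def induce (G : Digraph V) (s : Set V) : Digraph s where
  Adj x y := G.Adj x.1 y.1
  loopless := fun v h => G.loopless v.1 h

end Digraph

/-- The Cartesian product of a family of digraphs. -/
def piBox {ι : Type*} {W : ι → Type*} (G : ∀ i, Digraph (W i)) : Digraph (∀ i, W i) where
  Adj x y := ∃ i, (G i).Adj (x i) (y i) ∧ ∀ j, j ≠ i → x j = y j
  loopless := by
    rintro v ⟨i, hi, -⟩
    exact (G i).loopless _ hi

/-- The Cayley digraph `Cay(A,S)` of an additive group (for `S ⊆ A ∖ {0}`). -/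
def Cay (A : Type*) [AddGroup A] (S : Set A) : Digraph A where
  Adj x y := x ≠ y ∧ y - x ∈ S
  loopless := fun _ h => h.1 rfl

/-- The Cayley graph of an additive group with respect to a symmetric connection set. -/
def cayleyGraph (A : Type*) [AddGroup A] (S : Set A) : SimpleGraph A where
  Adj x y := x ≠ y ∧ (y - x ∈ S ∨ x - y ∈ S)
  symm := ⟨fun _ _ h => ⟨h.1.symm, h.2.symm⟩⟩
  loopless := ⟨fun _ h => h.1 rfl⟩

/-- The Hamming graph `H(ι, S)`: vertices are tuples, adjacent iff they differ in
exactly one coordinate. -/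
def hammingGraph (ι : Type*) (S : Type*) : SimpleGraph (ι → S) where
  Adj x y := ∃ i, x i ≠ y i ∧ ∀ j, j ≠ i → x j = y j
  symm := by
    constructor
    rintro x y ⟨i, h1, h2⟩
    exact ⟨i, h1.symm, fun j hj => (h2 j hj).symm⟩
  loopless := by
    constructor
    rintro x ⟨i, h1, -⟩
    exact h1 rfl

/-- The folded `n`-cube: vertices are `(n-1)`-tuples over `ℤ₂`, adjacent iff they
differ in exactly one coordinate or in all `n-1` coordinates. -/
def foldedCube (n : ℕ) : SimpleGraph (Fin (n - 1) → ZMod 2) where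
  Adj x y := (∃ i, x i ≠ y i ∧ ∀ j, j ≠ i → x j = y j) ∨ (x ≠ y ∧ ∀ j, x j ≠ y j)
  symm := by
    constructor
    rintro x y (⟨i, h1, h2⟩ | ⟨h1, h2⟩)
    · exact Or.inl ⟨i, h1.symm, fun j hj => (h2 j hj).symm⟩
    · exact Or.inr ⟨h1.symm, fun j => (h2 j).symm⟩
  loopless := by
    constructor
    rintro x (⟨i, h1, -⟩ | ⟨h1, -⟩)
    · exact h1 rfl
    · exact h1 rfl

/-- The Cartesian product of a family of simple graphs. -/
def piBoxGraph {ι : Type*} {W : ι → Type*} (G : ∀ i, SimpleGraph (W i)) :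
    SimpleGraph (∀ i, W i) where
  Adj x y := ∃ i, (G i).Adj (x i) (y i) ∧ ∀ j, j ≠ i → x j = y j
  symm := by
    constructor
    rintro x y ⟨i, h1, h2⟩
    exact ⟨i, (G i).adj_symm h1, fun j hj => (h2 j hj).symm⟩
  loopless := by
    constructor
    rintro x ⟨i, h1, -⟩
    exact (G i).irrefl h1

/-- The Shrikhande graph `Cay(ℤ₄ × ℤ₄, {±(1,0), ±(0,1), ±(1,1)})`. -/
def shrikhande : SimpleGraph (ZMod 4 × ZMod 4) :=
  cayleyGraph (ZMod 4 × ZMod 4) {(1, 0), (-1, 0), (0, 1), (0, -1), (1, 1), (-1, -1)}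

/-- The Doob graph `G(d₁, d₂)`: the Cartesian product of `d₁` copies of the
Shrikhande graph with the Hamming graph `H(d₂, 4)`. -/
def doobGraph (d₁ d₂ : ℕ) :
    SimpleGraph ((Fin d₁ → ZMod 4 × ZMod 4) × (Fin d₂ → ZMod 4)) :=
  (piBoxGraph fun _ : Fin d₁ => shrikhande).boxProd (hammingGraph (Fin d₂) (ZMod 4))

/-- `c_i(x,y)`: the number of neighbours of `y` at distance `i - 1` from `x`. -/
noncomputable def cNum (G : SimpleGraph V) (i : ℕ) (x y : V) : ℕ :=
  Nat.card {z : V | G.Adj y z ∧ G.dist x z = i - 1}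

/-- `a_i(x,y)`: the number of neighbours of `y` at distance `i` from `x`. -/
noncomputable def aNum (G : SimpleGraph V) (i : ℕ) (x y : V) : ℕ :=
  Nat.card {z : V | G.Adj y z ∧ G.dist x z = i}

/-- `b_i(x,y)`: the number of neighbours of `y` at distance `i + 1` from `x`. -/
noncomputable def bNum (G : SimpleGraph V) (i : ℕ) (x y : V) : ℕ :=
  Nat.card {z : V | G.Adj y z ∧ G.dist x z = i + 1}

/-- A distance-regular graph. -/
def IsDRG (G : SimpleGraph V) : Prop :=
  G.Connected ∧
    ∀ (i : ℕ) (x y x' y' : V), G.dist x y = i → G.dist x' y' = i →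
      cNum G i x y = cNum G i x' y' ∧ bNum G i x y = bNum G i x' y'

/-- A distance-transitive graph. -/
def IsDistanceTransitive (G : SimpleGraph V) : Prop :=
  G.Connected ∧
    ∀ x y x' y' : V, G.dist x y = G.dist x' y' → ∃ σ : G ≃g G, σ x = x' ∧ σ y = y'

/-- The vertex set of `Γ_i(α)`: all tuples obtained from `α` by inserting an
arbitrary element of `S` in the `i`-th coordinate. -/
def lineSet {n : ℕ} {S : Type*} (i : Fin (n + 1)) (α : Fin n → S) : Set (Fin (n + 1) → S) :=
  Set.range fun b : S => i.insertNth b α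

/-- The induced subdigraph `Γ_i(α)`. -/
def Digraph.line {n : ℕ} {S : Type*} (Γ : Digraph (Fin (n + 1) → S)) (i : Fin (n + 1))
    (α : Fin n → S) : Digraph (lineSet i α) :=
  Γ.induce (lineSet i α)

/-- Pad a tuple of length `m` with the entry `o` to a tuple of length `d`. -/
def pad {S : Type*} (o : S) (d m : ℕ) (α : Fin m → S) : Fin d → S :=
  fun j => if h : j.1 < m then α ⟨j.1, h⟩ else o

/-- The digraph `Γ^{[m]}` on `S^m`: `(α,β)` is an arc iff the padded tuples form
an arc of `Γ`. -/
def Digraph.trunc {S : Type*} {d : ℕ} (Γ : Digraph (Fin d → S)) (o : S) (m : ℕ) :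
    Digraph (Fin m → S) where
  Adj α β := Γ.Adj (pad o d m α) (pad o d m β)
  loopless := fun _ h => Γ.loopless _ h

/-- The digraph `Γ^i` on `S`: `(a,b)` is an arc iff the tuples with `a` resp. `b`
in the `i`-th coordinate and `o` elsewhere form an arc of `Γ`. -/
def Digraph.coordDigraph {S : Type*} {d : ℕ} (Γ : Digraph (Fin d → S)) (o : S) (i : Fin d) :
    Digraph S where
  Adj a b := Γ.Adj (Function.update (fun _ => o) i a) (Function.update (fun _ => o) i b)
  loopless := fun _ h => Γ.loopless _ h

/-- The set `T = S^{m-1} × {(o,…,o)}` (as a subset of `S^{d-1}`, here `d = n+1`). -/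
def Tset {n : ℕ} (S : Type*) (o : S) (m : ℕ) : Set (Fin n → S) :=
  {α | ∀ j : Fin n, m - 1 ≤ j.1 → α j = o}

end Paper

section Helpers

namespace Paper
namespace Digraph

variable {V : Type*} {Γ : Paper.Digraph V}

lemma hasPath_zero (Γ : Paper.Digraph V) (x : V) : Γ.HasPath x x 0 :=
  ⟨fun _ => x, rfl, rfl, fun k hk => absurd hk (Nat.not_lt_zero k)⟩

lemma hasPath_one {x y : V} (h : Γ.Adj x y) : Γ.HasPath x y 1 := by
  refine ⟨fun k => if k = 0 then x else y, by simp, by simp, ?_⟩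
  intro k hk
  interval_cases k
  simpa using h

lemma hasPath_append {x y z : V} {m n : ℕ} (h1 : Γ.HasPath x y m) (h2 : Γ.HasPath y z n) :
    Γ.HasPath x z (m + n) := by
  obtain ⟨f, f0, fm, hf⟩ := h1
  obtain ⟨g, g0, gn, hg⟩ := h2
  refine ⟨fun k => if k < m then f k else g (k - m), ?_, ?_, ?_⟩
  · by_cases h : 0 < m
    · simp [h, f0]
    · have hm : m = 0 := by omega
      subst hm
      simpa [g0, ← f0] using fm.symm
  · have h : ¬ (m + n < m) := by omega
    simp only [h, if_false]
    have : m + n - m = n := by omega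
    rw [this, gn]
  · intro k hk
    by_cases h1' : k + 1 < m
    · have hk' : k < m := by omega
      simp only [h1', hk', if_true]
      exact hf k (by omega)
    · by_cases h2' : k < m
      · -- k + 1 = m
        have hm : k + 1 = m := by omega
        simp only [h1', h2', if_true, if_false]
        have : k + 1 - m = 0 := by omega
        rw [this, g0, ← fm, ← hm]
        exact hf k (by omega)
      · simp only [h1', h2', if_false]
        have : k + 1 - m = (k - m) + 1 := by omega
        rw [this]
        exact hg (k - m) (by omega)

variable (hne : ∀ x y : V, {n | Γ.HasPath x y n}.Nonempty)
include hne

lemma dist_spec (x y : V) : Γ.HasPath x y (Γ.dist x y) := Nat.sInf_mem (hne x y)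

omit hne in
lemma dist_le {x y : V} {n : ℕ} (h : Γ.HasPath x y n) : Γ.dist x y ≤ n := Nat.sInf_le h

omit hne in
lemma dist_self (Γ : Paper.Digraph V) (x : V) : Γ.dist x x = 0 :=
  Nat.eq_zero_of_le_zero (Nat.sInf_le (Γ.hasPath_zero x))

lemma eq_of_dist_eq_zero {x y : V} (h : Γ.dist x y = 0) : x = y := by
  obtain ⟨f, f0, fn, -⟩ := dist_spec hne x y
  rw [h] at fn
  rw [← f0, fn]

lemma dist_triangle (x y z : V) : Γ.dist x z ≤ Γ.dist x y + Γ.dist y z :=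
  dist_le (hasPath_append (dist_spec hne x y) (dist_spec hne y z))

lemma dist_eq_one_of_adj {x y : V} (h : Γ.Adj x y) : Γ.dist x y = 1 := by
  have h1 : Γ.dist x y ≤ 1 := dist_le (hasPath_one h)
  have h0 : Γ.dist x y ≠ 0 := by
    intro h0
    exact Γ.loopless y (by rwa [eq_of_dist_eq_zero hne h0] at h)
  omega

lemma adj_of_dist_eq_one {x y : V} (h : Γ.dist x y = 1) : Γ.Adj x y := by
  have := dist_spec hne x y
  rw [h] at this
  obtain ⟨f, f0, f1, hf⟩ := this
  have := hf 0 (by omega)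
  rwa [f0, f1] at this

end Digraph
end Paper

end Helpers

section Counting

open Finset

lemma nat_card_filter {α : Type*} [Fintype α] (P : α → Prop) [DecidablePred P] :
    Nat.card {v | P v} = (Finset.univ.filter P).card := by
  rw [Nat.card_coe_set_eq, Set.ncard_eq_toFinset_card', Set.toFinset_setOf]

namespace Paper
namespace Digraph

variable {V : Type*} {Γ : Paper.Digraph V}

lemma tdist_self (Γ : Paper.Digraph V) (x : V) : Γ.tdist x x = (0, 0) := by
  simp [Digraph.tdist, dist_self]

lemma card_tdist_const (hwdr : Γ.IsWDR) (i : ℕ × ℕ) (x z : V) :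
    Nat.card {v | Γ.tdist x v = i} = Nat.card {v | Γ.tdist z v = i} := by
  have key : ∀ w : V, {v | Γ.tdist w v = i} = Γ.P i i.swap w w := by
    intro w
    ext v
    simp only [Digraph.P, Set.mem_setOf_eq]
    constructor
    · intro h
      refine ⟨h, ?_⟩
      have h1 : Γ.dist w v = i.1 := by rw [← h]; rfl
      have h2 : Γ.dist v w = i.2 := by rw [← h]; rfl
      simp [Digraph.tdist, Prod.ext_iff, h1, h2]
    · exact fun h => h.1
  rw [key x, key z, hwdr.2, hwdr.2, tdist_self, tdist_self]

lemma card_tdist_mem_const [Finite V] (hwdr : Γ.IsWDR) (T : Set (ℕ × ℕ)) (x z : V) :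
    Nat.card {v | Γ.tdist x v ∈ T} = Nat.card {v | Γ.tdist z v ∈ T} := by
  classical
  cases nonempty_fintype V
  have hsplit : ∀ (w : V) (B : Finset (ℕ × ℕ)), (∀ v : V, Γ.tdist w v ∈ B) →
      (univ.filter (fun v => Γ.tdist w v ∈ T)).card
        = ∑ i ∈ B.filter (· ∈ T), (univ.filter (fun v => Γ.tdist w v = i)).card := by
    intro w B hB
    rw [← Finset.card_biUnion]
    · congr 1
      ext v
      simp only [Finset.mem_biUnion, Finset.mem_filter, Finset.mem_univ, true_and]
      constructor
      · intro h
        exact ⟨Γ.tdist w v, ⟨hB v, h⟩, rfl⟩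
      · rintro ⟨i, ⟨-, hi⟩, rfl⟩
        exact hi
    · intro a _ b _ hab
      rw [Function.onFun, Finset.disjoint_left]
      intro v hv1 hv2
      simp only [Finset.mem_filter, Finset.mem_univ, true_and] at hv1 hv2
      exact hab (hv1 ▸ hv2 ▸ rfl)
  set B : Finset (ℕ × ℕ) :=
    (univ.image (fun v => Γ.tdist x v)) ∪ (univ.image (fun v => Γ.tdist z v)) with hBdef
  have hBx : ∀ v : V, Γ.tdist x v ∈ B := by
    intro v
    simp [hBdef]
  have hBz : ∀ v : V, Γ.tdist z v ∈ B := by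
    intro v
    simp [hBdef]
  rw [nat_card_filter, nat_card_filter, hsplit x B hBx, hsplit z B hBz]
  refine Finset.sum_congr rfl fun i _ => ?_
  have := card_tdist_const hwdr i x z
  rwa [nat_card_filter, nat_card_filter] at this

end Digraph
end Paper

end Counting

section Main

open Finset

namespace Paper
namespace Digraph

variable {V : Type*} {Γ : Paper.Digraph V}

lemma dist_le_two [Finite V] (hsc : Γ.IsSemicomplete) (hwdr : Γ.IsWDR) (z x : V) :
    Γ.dist z x ≤ 2 := by
  classical
  cases nonempty_fintype V
  have hne : ∀ x y : V, {n | Γ.HasPath x y n}.Nonempty := hwdr.1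
  by_contra hq
  have hq3 : 3 ≤ Γ.dist z x := by omega
  have hzx : z ≠ x := by
    intro h
    rw [h, dist_self] at hq3
    omega
  have hnadj : ¬ Γ.Adj z x := fun h => by
    have := dist_eq_one_of_adj hne h
    omega
  have hadj_xz : Γ.Adj x z := (hsc x z (Ne.symm hzx)).resolve_right hnadj
  set T : Set (ℕ × ℕ) := {p : ℕ × ℕ | p.1 = 1 ∧ 2 ≤ p.2} with hT
  have memT : ∀ w v : V, Γ.tdist w v ∈ T ↔ (Γ.dist w v = 1 ∧ 2 ≤ Γ.dist v w) := fun w v => Iff.rfl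
  set Sx : Finset V := univ.filter (fun v => Γ.tdist x v ∈ T) with hSx
  set Sz : Finset V := univ.filter (fun v => Γ.tdist z v ∈ T) with hSz
  set Oz : Finset V := univ.filter (fun v => Γ.Adj z v) with hOz
  have hcards : Sx.card = Sz.card := by
    have h := Γ.card_tdist_mem_const hwdr T x z
    rwa [nat_card_filter, nat_card_filter] at h
  have hz_mem : z ∈ Sx := by
    rw [hSx, Finset.mem_filter]
    exact ⟨Finset.mem_univ z, (memT x z).2 ⟨dist_eq_one_of_adj hne hadj_xz, by omega⟩⟩
  have hSzOz : Sz ⊆ Oz := by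
    intro v hv
    rw [hSz, Finset.mem_filter, memT] at hv
    rw [hOz, Finset.mem_filter]
    exact ⟨Finset.mem_univ v, adj_of_dist_eq_one hne hv.2.1⟩
  have hOzSx : Oz ⊆ Sx.erase z := by
    intro u hu
    rw [hOz, Finset.mem_filter] at hu
    have hadj_zu : Γ.Adj z u := hu.2
    have huz : u ≠ z := by
      rintro rfl
      exact Γ.loopless u hadj_zu
    have hdzu : Γ.dist z u = 1 := dist_eq_one_of_adj hne hadj_zu
    have htri := dist_triangle hne z u x
    have hdux : 2 ≤ Γ.dist u x := by omega
    have hux : u ≠ x := by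
      intro h
      rw [h, dist_self] at hdux
      omega
    have hnadj_ux : ¬ Γ.Adj u x := fun h => by
      have := dist_eq_one_of_adj hne h
      omega
    have hadj_xu : Γ.Adj x u := (hsc x u (Ne.symm hux)).resolve_right hnadj_ux
    rw [Finset.mem_erase, hSx, Finset.mem_filter]
    exact ⟨huz, Finset.mem_univ u, (memT x u).2 ⟨dist_eq_one_of_adj hne hadj_xu, hdux⟩⟩
  have c1 : Sz.card ≤ Oz.card := Finset.card_le_card hSzOz
  have c2 : Oz.card ≤ (Sx.erase z).card := Finset.card_le_card hOzSx
  have c3 : (Sx.erase z).card = Sx.card - 1 := Finset.card_erase_of_mem hz_mem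
  have c4 : 0 < Sx.card := Finset.card_pos.2 ⟨z, hz_mem⟩
  omega

end Digraph
end Paper

end Main

open Paper in
/-- **Proposition 3.5.** A semicomplete weakly distance-regular digraph that is
not an undirected graph has diameter `2`, girth `≤ 3`, and its two-way distance
set is `{(0,0),(1,2),(2,1)}` or `{(0,0),(1,1),(1,2),(2,1)}`. -/
theorem prop_semicomplete {V : Type*} [Finite V] [Nonempty V] (Γ : Paper.Digraph V)
    (hsc : Γ.IsSemicomplete) (hwdr : Γ.IsWDR) (hnund : ¬ Γ.IsUndirected) :
    Γ.diameter = 2 ∧ Γ.girth ≤ 3 ∧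
      (Γ.tdSet = {((0 : ℕ), (0 : ℕ)), (1, 2), (2, 1)} ∨
        Γ.tdSet = {((0 : ℕ), (0 : ℕ)), (1, 1), (1, 2), (2, 1)}) := by
    classical
  have hne : ∀ x y : V, {n | Γ.HasPath x y n}.Nonempty := hwdr.1
  rw [Paper.Digraph.IsUndirected] at hnund
  push_neg at hnund
  obtain ⟨a, b, hab, hnba⟩ := hnund
  have hdab : Γ.dist a b = 1 := Digraph.dist_eq_one_of_adj hne hab
  have hanb : a ≠ b := by
    rintro rfl
    exact Γ.loopless a hab
  have hba2 : Γ.dist b a = 2 := by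
    have hle := Digraph.dist_le_two hsc hwdr b a
    have h0 : Γ.dist b a ≠ 0 := fun h => hanb (Digraph.eq_of_dist_eq_zero hne h).symm
    have h1 : Γ.dist b a ≠ 1 := fun h => hnba (Digraph.adj_of_dist_eq_one hne h)
    omega
  have pairs : ∀ x y : V, x ≠ y →
      (Γ.dist x y = 1 ∧ Γ.dist y x = 2) ∨ (Γ.dist x y = 2 ∧ Γ.dist y x = 1) ∨
        (Γ.dist x y = 1 ∧ Γ.dist y x = 1) := by
    intro x y hxy
    have hle1 := Digraph.dist_le_two hsc hwdr x y
    have hle2 := Digraph.dist_le_two hsc hwdr y x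
    have h01 : Γ.dist x y ≠ 0 := fun h => hxy (Digraph.eq_of_dist_eq_zero hne h)
    have h02 : Γ.dist y x ≠ 0 := fun h => hxy (Digraph.eq_of_dist_eq_zero hne h).symm
    have hone : Γ.dist x y = 1 ∨ Γ.dist y x = 1 := by
      rcases hsc x y hxy with h | h
      · exact Or.inl (Digraph.dist_eq_one_of_adj hne h)
      · exact Or.inr (Digraph.dist_eq_one_of_adj hne h)
    omega
  refine ⟨?_, ?_, ?_⟩
  · apply le_antisymm
    · apply csSup_le
      · exact ⟨0, a, a, Digraph.dist_self Γ a⟩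
      · rintro n ⟨x, y, rfl⟩
        exact Digraph.dist_le_two hsc hwdr x y
    · apply le_csSup
      · refine ⟨2, ?_⟩
        rintro n ⟨x, y, rfl⟩
        exact Digraph.dist_le_two hsc hwdr x y
      · exact ⟨b, a, hba2⟩
  · have hpath : Γ.HasPath a a 3 := by
      have h1 : Γ.HasPath a b 1 := Digraph.hasPath_one hab
      have h2 : Γ.HasPath b a 2 := by
        have := Digraph.dist_spec hne b a
        rwa [hba2] at this
      exact Digraph.hasPath_append h1 h2
    exact Nat.sInf_le ⟨by omega, a, hpath⟩
  · have h00 : ((0 : ℕ), (0 : ℕ)) ∈ Γ.tdSet := ⟨a, a, Digraph.tdist_self Γ a⟩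
    have h12 : ((1 : ℕ), (2 : ℕ)) ∈ Γ.tdSet := ⟨a, b, by simp [Digraph.tdist, hdab, hba2]⟩
    have h21 : ((2 : ℕ), (1 : ℕ)) ∈ Γ.tdSet := ⟨b, a, by simp [Digraph.tdist, hdab, hba2]⟩
    have hsub : ∀ p ∈ Γ.tdSet,
        p = ((0 : ℕ), (0 : ℕ)) ∨ p = (1, 1) ∨ p = (1, 2) ∨ p = (2, 1) := by
      rintro p ⟨x, y, rfl⟩
      by_cases hxy : x = y
      · subst hxy
        exact Or.inl (Digraph.tdist_self Γ x)
      · rcases pairs x y hxy with ⟨h1, h2⟩ | ⟨h1, h2⟩ | ⟨h1, h2⟩ <;>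
          simp [Digraph.tdist, Prod.ext_iff, h1, h2]
    by_cases h11 : ((1 : ℕ), (1 : ℕ)) ∈ Γ.tdSet
    · right
      ext p
      simp only [Set.mem_insert_iff, Set.mem_singleton_iff]
      constructor
      · exact hsub p
      · rintro (rfl | rfl | rfl | rfl) <;> assumption
    · left
      ext p
      simp only [Set.mem_insert_iff, Set.mem_singleton_iff]
      constructor
      · intro hp
        rcases hsub p hp with h | h | h | h
        · exact Or.inl h
        · exact absurd (h ▸ hp) h11
        · exact Or.inr (Or.inl h)
        · exact Or.inr (Or.inr h)
      · rintro (rfl | rfl | rfl) <;> assumption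
end

section
/- Let 1≤i≤m, α∈T, x,y∈V(Γᵢ(α)) and z∈V(Γ)∖V(Γᵢ(α)). Suppose (x,y)∈Γ_{1,p−1} with p>2, (y,z)∈Γ_{1,s−1} with s≥2, and (x,z)∈Γ_{2,2}. Then s=p and there exists a unique vertex y'∈P_{(1,p−1),(1,p−1)}(z,x), and this y' satisfies y'∉V(Γᵢ(α)). -/
section Helpers

open Paper

variable {V : Type*} {G : Paper.Digraph V} {x y : V}

lemma Paper.Digraph.hasPath_one_iff : G.HasPath x y 1 ↔ G.Adj x y := by
  constructor
  · rintro ⟨f, h0, h1, hadj⟩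
    have := hadj 0 (by norm_num)
    simpa [h0, h1] using this
  · intro h
    refine ⟨fun k => if k = 0 then x else y, by simp, by simp, ?_⟩
    intro k hk
    interval_cases k
    simpa using h

lemma Paper.Digraph.hasPath_of_dist {n : ℕ} (h : G.dist x y = n) (hn : n ≠ 0) :
    G.HasPath x y n := by
  have hne : {k | G.HasPath x y k}.Nonempty := by
    by_contra h'
    rw [Set.not_nonempty_iff_eq_empty] at h'
    rw [Paper.Digraph.dist, h', Nat.sInf_empty] at h
    exact hn h.symm
  have := Nat.sInf_mem hne
  rwa [show sInf {k | G.HasPath x y k} = n from h] at this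

lemma Paper.Digraph.adj_of_dist_eq_one_s10 (h : G.dist x y = 1) : G.Adj x y :=
  Paper.Digraph.hasPath_one_iff.mp (Paper.Digraph.hasPath_of_dist h one_ne_zero)

lemma Paper.Digraph.dist_eq_one_of_adj_s10 (h : G.Adj x y) : G.dist x y = 1 := by
  have h1 : G.dist x y ≤ 1 := Nat.sInf_le (Paper.Digraph.hasPath_one_iff.mpr h)
  have h0 : G.dist x y ≠ 0 := by
    intro h0
    rw [Paper.Digraph.dist, Nat.sInf_eq_zero] at h0
    rcases h0 with h0 | h0
    · obtain ⟨f, hf0, hf1, -⟩ := h0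
      have hxy : x = y := by rw [← hf0, hf1]
      exact G.loopless x (hxy ▸ h)
    · have h1' : G.HasPath x y 1 := Paper.Digraph.hasPath_one_iff.mpr h
      exact Set.eq_empty_iff_forall_notMem.mp h0 1 h1'
  omega

lemma Paper.Digraph.exists_mid (h : G.dist x y = 2) :
    ∃ w, G.Adj x w ∧ G.Adj w y := by
  obtain ⟨f, h0, h2, hadj⟩ := Paper.Digraph.hasPath_of_dist h (by norm_num)
  exact ⟨f 1, by rw [← h0]; exact hadj 0 (by norm_num),
    by rw [← h2]; exact hadj 1 (by norm_num)⟩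

lemma Paper.Digraph.tdist_parts {a b : ℕ} (h : G.tdist x y = (a, b)) :
    G.dist x y = a ∧ G.dist y x = b := by
  rw [Paper.Digraph.tdist, Prod.mk.injEq] at h
  exact h

lemma Paper.Digraph.tdist_mk {a b : ℕ} (h1 : G.dist x y = a) (h2 : G.dist y x = b) :
    G.tdist x y = (a, b) := by
  rw [Paper.Digraph.tdist, h1, h2]

/-- Padding the restriction of a line vertex recovers it. -/
lemma pad_line {S : Type*} {n : ℕ} (o : S) (m : ℕ) (hmd : m ≤ n + 1)
    (i : Fin (n + 1)) (hi : i.1 < m) (α : Fin n → S) (hα : α ∈ Paper.Tset S o m)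
    (c : S) :
    Paper.pad o (n + 1) m
        (fun j : Fin m => (i.insertNth c α : Fin (n + 1) → S) ⟨j.1, lt_of_lt_of_le j.2 hmd⟩)
      = i.insertNth c α := by
  funext j
  rw [Paper.pad]
  split
  · congr 1
  · rename_i hjm
    have hij : j ≠ i := by
      intro e
      exact hjm (e ▸ hi)
    obtain ⟨k, hk⟩ := Fin.exists_succAbove_eq hij
    rw [← hk, Fin.insertNth_apply_succAbove]
    have hd : j.1 = k.1 ∨ j.1 = k.1 + 1 := by
      rw [← hk]
      rcases lt_or_ge k.castSucc i with h' | h'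
      · left; rw [Fin.succAbove_of_castSucc_lt _ _ h']; rfl
      · right; rw [Fin.succAbove_of_le_castSucc _ _ h']; rfl
    exact (hα k (by omega)).symm

/-- Any two distinct vertices of `Γᵢ(α)` (for `α ∈ T`, `i < m`) are adjacent in the
underlying graph, since the underlying graph of `Γ^{[m]}` is a Hamming graph. -/
lemma line_clique {S : Type*} {n : ℕ} (Γ : Paper.Digraph (Fin (n + 1) → S))
    (o : S) (m : ℕ) (hmd : m ≤ n + 1)
    (hham : (Γ.trunc o m).underlying = hammingGraph (Fin m) S)
    (i : Fin (n + 1)) (hi : i.1 < m) (α : Fin n → S) (hα : α ∈ Paper.Tset S o m)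
    {a b : Fin (n + 1) → S} (ha : a ∈ lineSet i α) (hb : b ∈ lineSet i α)
    (hab : a ≠ b) : Γ.underlying.Adj a b := by
  obtain ⟨b₁, rfl⟩ := ha
  obtain ⟨b₂, rfl⟩ := hb
  have hne : b₁ ≠ b₂ := by
    rintro rfl; exact hab rfl
  set a' : Fin m → S :=
    fun j => (i.insertNth b₁ α : Fin (n + 1) → S) ⟨j.1, lt_of_lt_of_le j.2 hmd⟩ with ha'
  set b' : Fin m → S :=
    fun j => (i.insertNth b₂ α : Fin (n + 1) → S) ⟨j.1, lt_of_lt_of_le j.2 hmd⟩ with hb'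
  have hii : (⟨i.1, lt_of_lt_of_le hi hmd⟩ : Fin (n + 1)) = i := rfl
  have hadj : (hammingGraph (Fin m) S).Adj a' b' := by
    refine ⟨⟨i.1, hi⟩, ?_, ?_⟩
    · show (i.insertNth b₁ α : Fin (n + 1) → S) ⟨i.1, _⟩
        ≠ (i.insertNth b₂ α : Fin (n + 1) → S) ⟨i.1, _⟩
      rw [hii, Fin.insertNth_apply_same, Fin.insertNth_apply_same]
      exact hne
    · intro j hj
      show (i.insertNth b₁ α : Fin (n + 1) → S) ⟨j.1, _⟩
        = (i.insertNth b₂ α : Fin (n + 1) → S) ⟨j.1, _⟩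
      have hji : (⟨j.1, lt_of_lt_of_le j.2 hmd⟩ : Fin (n + 1)) ≠ i := by
        intro e
        apply hj
        apply Fin.ext
        have : j.1 = i.1 := congrArg Fin.val e
        exact this
      obtain ⟨k, hk⟩ := Fin.exists_succAbove_eq hji
      rw [← hk, Fin.insertNth_apply_succAbove, Fin.insertNth_apply_succAbove]
  rw [← hham] at hadj
  have key₁ : Paper.pad o (n + 1) m a' = i.insertNth b₁ α := pad_line o m hmd i hi α hα b₁
  have key₂ : Paper.pad o (n + 1) m b' = i.insertNth b₂ α := pad_line o m hmd i hi α hα b₂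
  rcases hadj with h | h
  · have h2 : Γ.Adj (Paper.pad o (n + 1) m a') (Paper.pad o (n + 1) m b') := h
    rw [key₁, key₂] at h2
    exact Or.inl h2
  · have h2 : Γ.Adj (Paper.pad o (n + 1) m b') (Paper.pad o (n + 1) m a') := h
    rw [key₁, key₂] at h2
    exact Or.inr h2

end Helpers

open Paper in
/-- **Lemma 3.9.** Let `x,y ∈ V(Γᵢ(α))` and `z ∉ V(Γᵢ(α))` with
`(x,y) ∈ Γ_{1,p−1}` (`p > 2`), `(y,z) ∈ Γ_{1,s−1}` (`s ≥ 2`) and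
`(x,z) ∈ Γ_{2,2}`. Then `s = p` and there is a unique
`y' ∈ P_{(1,p−1),(1,p−1)}(z,x)`, which lies outside `Γᵢ(α)`. -/
theorem lemma_degree_three {S : Type*} [Finite S] {n : ℕ}
    (Γ : Paper.Digraph (Fin (n + 1) → S)) (q : ℕ) (hq : q = Nat.card S)
    (hwdr : Γ.IsWDR) (hcomm : Γ.IsCommutative)
    (hdrg : IsDRG Γ.underlying)
    (ha1 : ∀ x y, Γ.underlying.dist x y = 1 → aNum Γ.underlying 1 x y = q - 2)
    (hc2 : ∀ x y, Γ.underlying.dist x y = 2 → cNum Γ.underlying 2 x y = 2)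
    (o : S) (m : ℕ) (hm1 : 1 ≤ m) (hmd : m ≤ n + 1)
    (hham : (Γ.trunc o m).underlying = hammingGraph (Fin m) S)
    (i : Fin (n + 1)) (hi : i.1 < m)
    (α : Fin n → S) (hα : α ∈ Tset S o m)
    (x y z : Fin (n + 1) → S) (hx : x ∈ lineSet i α) (hy : y ∈ lineSet i α)
    (hz : z ∉ lineSet i α)
    (p s : ℕ) (hp2 : 2 < p) (hs2 : 2 ≤ s)
    (hxy : Γ.tdist x y = (1, p - 1)) (hyz : Γ.tdist y z = (1, s - 1))
    (hxz : Γ.tdist x z = (2, 2)) :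
    s = p ∧ (∃! y', y' ∈ Γ.P (1, p - 1) (1, p - 1) z x) ∧
      ∀ y' ∈ Γ.P (1, p - 1) (1, p - 1) z x, y' ∉ lineSet i α := by
  classical
  have hxyc := hxy; have hyzc := hyz; have hxzc := hxz
  obtain ⟨hxy1, hyx⟩ := Paper.Digraph.tdist_parts hxy
  obtain ⟨hyz1, hzy⟩ := Paper.Digraph.tdist_parts hyz
  obtain ⟨hxz2, hzx2⟩ := Paper.Digraph.tdist_parts hxz
  have axy : Γ.Adj x y := Paper.Digraph.adj_of_dist_eq_one_s10 hxy1
  have ayz : Γ.Adj y z := Paper.Digraph.adj_of_dist_eq_one_s10 hyz1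
  have nyx : ¬ Γ.Adj y x := fun h => by
    have := Paper.Digraph.dist_eq_one_of_adj_s10 h; omega
  have nxz : ¬ Γ.Adj x z := fun h => by
    have := Paper.Digraph.dist_eq_one_of_adj_s10 h; omega
  have nzx : ¬ Γ.Adj z x := fun h => by
    have := Paper.Digraph.dist_eq_one_of_adj_s10 h; omega
  obtain ⟨u, hzu, hux⟩ := Paper.Digraph.exists_mid hzx2
  -- underlying graph facts
  have sxy : Γ.underlying.Adj x y := Or.inl axy
  have syz : Γ.underlying.Adj y z := Or.inl ayz
  have szy : Γ.underlying.Adj z y := Or.inr ayz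
  have hxnez : x ≠ z := by
    rintro rfl
    have : Γ.dist x x = 0 :=
      Nat.sInf_eq_zero.mpr (Or.inl ⟨fun _ => x, rfl, rfl, by omega⟩)
    omega
  have nsxz : ¬ Γ.underlying.Adj x z := fun h => h.elim nxz nzx
  have hdle : Γ.underlying.dist x z ≤ 2 := by
    have := SimpleGraph.dist_le
      (SimpleGraph.Walk.cons sxy (SimpleGraph.Walk.cons syz SimpleGraph.Walk.nil))
    simpa using this
  have hreach : Γ.underlying.Reachable x z :=
    ⟨SimpleGraph.Walk.cons sxy (SimpleGraph.Walk.cons syz SimpleGraph.Walk.nil)⟩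
  have hdne0 : Γ.underlying.dist x z ≠ 0 := by
    intro h0
    rcases SimpleGraph.dist_eq_zero_iff_eq_or_not_reachable.mp h0 with h | h
    · exact hxnez h
    · exact h hreach
  have hdne1 : Γ.underlying.dist x z ≠ 1 := fun h =>
    nsxz (SimpleGraph.dist_eq_one_iff_adj.mp h)
  have hsdist : Γ.underlying.dist x z = 2 := by omega
  -- the common neighbours of x and z
  have hC := hc2 x z hsdist
  rw [cNum] at hC
  have hCset : {w | Γ.underlying.Adj z w ∧ Γ.underlying.dist x w = 2 - 1}
      = {w | Γ.underlying.Adj z w ∧ Γ.underlying.Adj x w} := by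
    ext w
    simp only [Set.mem_setOf_eq, show (2:ℕ) - 1 = 1 from rfl,
      SimpleGraph.dist_eq_one_iff_adj]
  rw [hCset] at hC
  have yC : y ∈ {w | Γ.underlying.Adj z w ∧ Γ.underlying.Adj x w} := ⟨szy, sxy⟩
  have uC : u ∈ {w | Γ.underlying.Adj z w ∧ Γ.underlying.Adj x w} :=
    ⟨Or.inl hzu, Or.inr hux⟩
  have hyu : y ≠ u := by
    rintro rfl; exact nyx hux
  have hCeq : {w | Γ.underlying.Adj z w ∧ Γ.underlying.Adj x w} = {y, u} := by
    refine (Set.eq_of_subset_of_ncard_le ?_ ?_ (Set.toFinite _)).symm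
    · rintro w (rfl | rfl)
      · exact yC
      · exact uC
    · rw [Set.ncard_pair hyu, ← Nat.card_coe_set_eq]
      exact le_of_eq hC
  have hmemC : ∀ w, Γ.Adj x w → Γ.Adj w z → w = y ∨ w = u := fun w h1 h2 => by
    have hw : w ∈ {w | Γ.underlying.Adj z w ∧ Γ.underlying.Adj x w} :=
      ⟨Or.inr h2, Or.inl h1⟩
    rwa [hCeq] at hw
  have hmemC' : ∀ w, Γ.Adj z w → Γ.Adj w x → w = y ∨ w = u := fun w h1 h2 => by
    have hw : w ∈ {w | Γ.underlying.Adj z w ∧ Γ.underlying.Adj x w} :=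
      ⟨Or.inl h1, Or.inr h2⟩
    rwa [hCeq] at hw
  -- two-way distance set memberships
  have h22 : ((2:ℕ), (2:ℕ)) ∈ Γ.tdSet := ⟨x, z, hxzc⟩
  have h1p : ((1:ℕ), p - 1) ∈ Γ.tdSet := ⟨x, y, hxyc⟩
  have h1s : ((1:ℕ), s - 1) ∈ Γ.tdSet := ⟨y, z, hyzc⟩
  -- Step 1: P_{(1,p-1),(1,s-1)}(x,z) = {y}
  have hAeq : Γ.P (1, p - 1) (1, s - 1) x z = {y} := by
    ext w
    constructor
    · rintro ⟨hw1, hw2⟩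
      obtain ⟨hw1a, hw1b⟩ := Paper.Digraph.tdist_parts hw1
      obtain ⟨hw2a, hw2b⟩ := Paper.Digraph.tdist_parts hw2
      have haxw : Γ.Adj x w := Paper.Digraph.adj_of_dist_eq_one_s10 hw1a
      have hawz : Γ.Adj w z := Paper.Digraph.adj_of_dist_eq_one_s10 hw2a
      rcases hmemC w haxw hawz with rfl | rfl
      · rfl
      · exfalso
        have := Paper.Digraph.dist_eq_one_of_adj_s10 hux
        omega
    · rintro rfl
      exact ⟨hxyc, hyzc⟩
  have hA1 : Nat.card (Γ.P (1, p - 1) (1, s - 1) x z) = 1 := by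
    rw [hAeq, Nat.card_coe_set_eq, Set.ncard_singleton]
  -- Step 2: commutativity gives |P_{(1,s-1),(1,p-1)}(x,z)| = 1, hence s = p
  have hB1 : Nat.card (Γ.P (1, s - 1) (1, p - 1) x z) = 1 := by
    rw [hwdr.2 (1, s - 1) (1, p - 1) x z, hxzc, hcomm _ _ _ h22 h1s h1p, ← hxzc,
      ← hwdr.2 (1, p - 1) (1, s - 1) x z]
    exact hA1
  obtain ⟨w₀, hw₀⟩ := Set.ncard_eq_one.mp
    (by rw [← Nat.card_coe_set_eq]; exact hB1)
  have hw₀mem : w₀ ∈ Γ.P (1, s - 1) (1, p - 1) x z := by rw [hw₀]; exact rfl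
  obtain ⟨hw1, hw2⟩ := hw₀mem
  obtain ⟨hw1a, hw1b⟩ := Paper.Digraph.tdist_parts hw1
  obtain ⟨hw2a, hw2b⟩ := Paper.Digraph.tdist_parts hw2
  have hsp : s = p := by
    rcases hmemC w₀ (Paper.Digraph.adj_of_dist_eq_one_s10 hw1a)
        (Paper.Digraph.adj_of_dist_eq_one_s10 hw2a) with rfl | rfl
    · omega
    · exfalso
      have := Paper.Digraph.dist_eq_one_of_adj_s10 hzu
      omega
  subst hsp
  -- Step 3: |P_{(1,p-1),(1,p-1)}(z,x)| = 1
  have hzxc : Γ.tdist z x = (2, 2) := Paper.Digraph.tdist_mk hzx2 hxz2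
  have hDeq : Γ.P (1, s - 1) (1, s - 1) x z = {y} := by
    ext w
    constructor
    · rintro ⟨hv1, hv2⟩
      obtain ⟨hv1a, hv1b⟩ := Paper.Digraph.tdist_parts hv1
      obtain ⟨hv2a, hv2b⟩ := Paper.Digraph.tdist_parts hv2
      rcases hmemC w (Paper.Digraph.adj_of_dist_eq_one_s10 hv1a)
          (Paper.Digraph.adj_of_dist_eq_one_s10 hv2a) with rfl | rfl
      · rfl
      · exfalso
        have := Paper.Digraph.dist_eq_one_of_adj_s10 hux
        omega
    · rintro rfl
      exact ⟨hxyc, hyzc⟩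
  have hD1 : Nat.card (Γ.P (1, s - 1) (1, s - 1) z x) = 1 := by
    rw [hwdr.2 (1, s - 1) (1, s - 1) z x, hzxc, ← hxzc,
      ← hwdr.2 (1, s - 1) (1, s - 1) x z, hDeq, Nat.card_coe_set_eq,
      Set.ncard_singleton]
  obtain ⟨y₀, hy₀⟩ := Set.ncard_eq_one.mp
    (by rw [← Nat.card_coe_set_eq]; exact hD1)
  -- Step 4: any member of P_{(1,p-1),(1,p-1)}(z,x) lies outside the line
  have hout : ∀ y' ∈ Γ.P (1, s - 1) (1, s - 1) z x, y' ∉ lineSet i α := by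
    intro y' hy' hy'line
    obtain ⟨hv1, hv2⟩ := hy'
    obtain ⟨hv1a, hv1b⟩ := Paper.Digraph.tdist_parts hv1
    obtain ⟨hv2a, hv2b⟩ := Paper.Digraph.tdist_parts hv2
    have azy' : Γ.Adj z y' := Paper.Digraph.adj_of_dist_eq_one_s10 hv1a
    have ay'x : Γ.Adj y' x := Paper.Digraph.adj_of_dist_eq_one_s10 hv2a
    have hyy' : y ≠ y' := by
      rintro rfl; exact nyx ay'x
    have hclique := fun {a b} ha hb hab =>
      line_clique Γ o m hmd hham i hi α hα (a := a) (b := b) ha hb hab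
    have hadjyy' : Γ.underlying.Adj y y' := hclique hy hy'line hyy'
    have hdyy' : Γ.underlying.dist y y' = 1 :=
      SimpleGraph.dist_eq_one_iff_adj.mpr hadjyy'
    have hN := ha1 y y' hdyy'
    rw [aNum] at hN
    have hNset : {w | Γ.underlying.Adj y' w ∧ Γ.underlying.dist y w = 1}
        = {w | Γ.underlying.Adj y' w ∧ Γ.underlying.Adj y w} := by
      ext w
      simp only [Set.mem_setOf_eq, SimpleGraph.dist_eq_one_iff_adj]
    rw [hNset, Nat.card_coe_set_eq] at hN
    have hsub : insert z (lineSet i α \ {y, y'})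
        ⊆ {w | Γ.underlying.Adj y' w ∧ Γ.underlying.Adj y w} := by
      rintro w hw
      rcases hw with rfl | ⟨hwl, hwne⟩
      · exact ⟨Or.inr azy', Or.inl ayz⟩
      · simp only [Set.mem_insert_iff, Set.mem_singleton_iff] at hwne
        push_neg at hwne
        exact ⟨hclique hy'line hwl (Ne.symm hwne.2), hclique hy hwl (Ne.symm hwne.1)⟩
    have hline_card : (lineSet i α).ncard = q := by
      have hinj : Function.Injective (fun b : S => (i.insertNth b α : Fin (n + 1) → S)) := by
        intro a b h
        have := congrFun h i
        simpa [Fin.insertNth_apply_same] using this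
      rw [lineSet, ← Nat.card_coe_set_eq, Nat.card_range_of_injective hinj, hq]
    have hpair_sub : {y, y'} ⊆ lineSet i α := by
      rintro w (rfl | rfl)
      · exact hy
      · exact hy'line
    have hdiff : (lineSet i α \ {y, y'}).ncard = q - 2 := by
      rw [Set.ncard_diff hpair_sub, hline_card, Set.ncard_pair hyy']
    have hznm : z ∉ lineSet i α \ {y, y'} := fun h => hz h.1
    have hins : (insert z (lineSet i α \ {y, y'})).ncard = q - 2 + 1 := by
      rw [Set.ncard_insert_of_notMem hznm, hdiff]
    have hle := Set.ncard_le_ncard hsub (Set.toFinite _)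
    rw [hins, hN] at hle
    omega
  have hy₀mem : y₀ ∈ Γ.P (1, s - 1) (1, s - 1) z x := by rw [hy₀]; exact rfl
  exact ⟨rfl, ⟨y₀, hy₀mem, fun w hw => by
    have : w ∈ ({y₀} : Set _) := by rw [← hy₀]; exact hw
    exact this⟩, hout⟩
end

section
/- Let 1≤i≤m, α∈T and x,y∈V(Γᵢ(α)) with (x,y)∈Γ_{1,p−1} for some p≥2. Then exactly one of the following holds: (i) d⁺_{Γᵢ(α)}(x)=d⁺_{Γᵢ(α)}(y), d⁻_{Γᵢ(α)}(x)=d⁻_{Γᵢ(α)}(y), and either p=2 or p^{(1,p−1)}_{(2,2),(s−1,1)}=0 for all (1,s−1)∈∂̃(Γ); (ii) d⁺_{Γᵢ(α)}(x)>d⁺_{Γᵢ(α)}(y), d⁻_{Γᵢ(α)}(x)<d⁻_{Γᵢ(α)}(y), p≠2, and p^{(1,p−1)}_{(2,2),(s−1,1)}≠0 for some (1,s−1)∈∂̃(Γ). -/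
namespace Paper

variable {V V' : Type*}

/-! ### Auxiliary lemmas -/

namespace Digraph

variable {V : Type*} {G : Digraph V}

lemma hasPath_zero_s11 {x y : V} : G.HasPath x y 0 ↔ x = y := by
  constructor
  · rintro ⟨f, h0, h1, -⟩; rw [← h0, h1]
  · rintro rfl; exact ⟨fun _ => x, rfl, rfl, by omega⟩

lemma hasPath_one_s11 {x y : V} : G.HasPath x y 1 ↔ G.Adj x y := by
  constructor
  · rintro ⟨f, h0, h1, h⟩
    have := h 0 (by omega)
    rwa [h0, h1] at this
  · intro h
    refine ⟨fun k => if k = 0 then x else y, by simp, by simp, ?_⟩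
    intro k hk
    interval_cases k
    simpa using h

lemma hasPath_two {x w y : V} (h1 : G.Adj x w) (h2 : G.Adj w y) : G.HasPath x y 2 := by
  refine ⟨fun k => if k = 0 then x else if k = 1 then w else y, by simp, by norm_num, ?_⟩
  intro k hk
  interval_cases k <;> simpa using (by first | exact h1 | exact h2)

lemma dist_self_s11 (G : Digraph V) (x : V) : G.dist x x = 0 :=
  Nat.sInf_eq_zero.2 (Or.inl (hasPath_zero_s11.2 rfl))

lemma dist_eq_zero_iff (hsc : G.StronglyConnected) {x y : V} :
    G.dist x y = 0 ↔ x = y := by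
  constructor
  · intro h
    have hm : G.HasPath x y (G.dist x y) := Nat.sInf_mem (hsc x y)
    rw [h] at hm
    exact hasPath_zero_s11.1 hm
  · rintro rfl; exact G.dist_self_s11 x

lemma dist_eq_one_iff (hsc : G.StronglyConnected) {x y : V} :
    G.dist x y = 1 ↔ G.Adj x y := by
  constructor
  · intro h
    have hm : G.HasPath x y (G.dist x y) := Nat.sInf_mem (hsc x y)
    rw [h] at hm
    exact hasPath_one_s11.1 hm
  · intro h
    have h1 : G.dist x y ≤ 1 := Nat.sInf_le (hasPath_one_s11.2 h)
    have h0 : G.dist x y ≠ 0 := by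
      intro h0
      rw [dist_eq_zero_iff hsc] at h0
      subst h0
      exact G.loopless x h
    omega

lemma dist_le_two_s11 {x w y : V} (h1 : G.Adj x w) (h2 : G.Adj w y) : G.dist x y ≤ 2 :=
  Nat.sInf_le (hasPath_two h1 h2)

lemma exists_mid_s11 (hsc : G.StronglyConnected) {x y : V} (h : G.dist x y = 2) :
    ∃ w, G.Adj x w ∧ G.Adj w y := by
  have hm : G.HasPath x y (G.dist x y) := Nat.sInf_mem (hsc x y)
  rw [h] at hm
  obtain ⟨f, h0, h2', hstep⟩ := hm
  exact ⟨f 1, h0 ▸ hstep 0 (by omega), h2' ▸ hstep 1 (by omega)⟩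

end Digraph

section Count

open scoped Classical

variable {V : Type*} [Finite V] {G : Digraph V}

namespace Digraph

lemma ncard_P (hwdr : G.IsWDR) (x y : V) (i j : ℕ × ℕ) :
    (G.P i j x y).ncard = G.p (G.tdist x y) i j := by
  rw [← Nat.card_coe_set_eq]
  exact hwdr.2 i j x y

lemma p_comm' (hwdr : G.IsWDR) (hcomm : G.IsCommutative) (x y : V) (i j : ℕ × ℕ) :
    G.p (G.tdist x y) i j = G.p (G.tdist x y) j i := by
  by_cases h1 : (G.P i j x y).Nonempty
  · obtain ⟨z, hz1, hz2⟩ := h1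
    exact hcomm _ i j ⟨x, y, rfl⟩ ⟨x, z, hz1⟩ ⟨z, y, hz2⟩
  · by_cases h2 : (G.P j i x y).Nonempty
    · obtain ⟨z, hz1, hz2⟩ := h2
      exact (hcomm _ j i ⟨x, y, rfl⟩ ⟨x, z, hz1⟩ ⟨z, y, hz2⟩).symm
    · rw [← ncard_P hwdr, ← ncard_P hwdr,
        Set.not_nonempty_iff_eq_empty.1 h1, Set.not_nonempty_iff_eq_empty.1 h2]

lemma exists_swap_mem (hwdr : G.IsWDR) (hcomm : G.IsCommutative) {x y z : V} {i j : ℕ × ℕ}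
    (hi : G.tdist x z = i) (hj : G.tdist z y = j) :
    ∃ t, G.tdist x t = j ∧ G.tdist t y = i := by
  have h1 : 0 < (G.P i j x y).ncard := by
    rw [Set.ncard_pos (Set.toFinite _)]
    exact ⟨z, hi, hj⟩
  rw [ncard_P hwdr, p_comm' hwdr hcomm, ← ncard_P hwdr] at h1
  obtain ⟨t, ht⟩ := (Set.ncard_pos (Set.toFinite _)).1 h1
  exact ⟨t, ht.1, ht.2⟩

open Finset in
lemma count_as_sum (hwdr : G.IsWDR) (x y : V) (U W : Set (ℕ × ℕ))
    (t : Finset ((ℕ × ℕ) × (ℕ × ℕ))) (ht : ∀ z : V, (G.tdist x z, G.tdist z y) ∈ t) :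
    {z | G.tdist x z ∈ U ∧ G.tdist z y ∈ W}.ncard
      = ∑ b ∈ t, if b.1 ∈ U ∧ b.2 ∈ W then G.p (G.tdist x y) b.1 b.2 else 0 := by
  classical
  haveI := Fintype.ofFinite V
  rw [Set.ncard_eq_toFinset_card', Set.toFinset_setOf]
  rw [Finset.card_eq_sum_card_fiberwise
    (f := fun z => (G.tdist x z, G.tdist z y)) (t := t) (fun z _ => ht z)]
  refine Finset.sum_congr rfl ?_
  intro b hb
  by_cases hbu : b.1 ∈ U ∧ b.2 ∈ W
  · rw [if_pos hbu]
    rw [← hwdr.2 b.1 b.2 x y, Nat.card_coe_set_eq]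
    have : G.P b.1 b.2 x y = {z | G.tdist x z = b.1 ∧ G.tdist z y = b.2} := rfl
    rw [this, Set.ncard_eq_toFinset_card', Set.toFinset_setOf]
    congr 1
    ext z
    simp only [Finset.mem_filter, Finset.mem_univ, true_and]
    constructor
    · rintro ⟨-, h⟩
      exact ⟨congrArg Prod.fst h, congrArg Prod.snd h⟩
    · rintro ⟨h1, h2⟩
      refine ⟨⟨h1 ▸ hbu.1, h2 ▸ hbu.2⟩, ?_⟩
      rw [h1, h2]
  · rw [if_neg hbu, Finset.card_eq_zero]
    ext z
    simp only [Finset.mem_filter, Finset.mem_univ, true_and, Finset.notMem_empty, iff_false,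
      not_and]
    rintro ⟨hu, hw⟩ h
    exact hbu ⟨(congrArg Prod.fst h) ▸ hu, (congrArg Prod.snd h) ▸ hw⟩

lemma count_eq (hwdr : G.IsWDR) (U W : Set (ℕ × ℕ)) {x y x' y' : V}
    (h : G.tdist x y = G.tdist x' y') :
    {z | G.tdist x z ∈ U ∧ G.tdist z y ∈ W}.ncard
      = {z | G.tdist x' z ∈ U ∧ G.tdist z y' ∈ W}.ncard := by
  classical
  haveI := Fintype.ofFinite V
  set t := (Finset.univ.image fun z : V => (G.tdist x z, G.tdist z y)) ∪
           (Finset.univ.image fun z : V => (G.tdist x' z, G.tdist z y')) with ht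
  rw [count_as_sum hwdr x y U W t
      (fun z => Finset.mem_union_left _ (Finset.mem_image_of_mem _ (Finset.mem_univ z))),
    count_as_sum hwdr x' y' U W t
      (fun z => Finset.mem_union_right _ (Finset.mem_image_of_mem _ (Finset.mem_univ z))), h]

lemma count_swap (hwdr : G.IsWDR) (hcomm : G.IsCommutative) (x y : V) (U W : Set (ℕ × ℕ)) :
    {z | G.tdist x z ∈ U ∧ G.tdist z y ∈ W}.ncard
      = {z | G.tdist x z ∈ W ∧ G.tdist z y ∈ U}.ncard := by
  classical
  haveI := Fintype.ofFinite V
  set t0 := Finset.univ.image fun z : V => (G.tdist x z, G.tdist z y) with ht0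
  set t := t0 ∪ t0.image Prod.swap with ht
  have htm : ∀ z : V, (G.tdist x z, G.tdist z y) ∈ t :=
    fun z => Finset.mem_union_left _ (Finset.mem_image_of_mem _ (Finset.mem_univ z))
  have hswap : ∀ b ∈ t, Prod.swap b ∈ t := by
    intro b hb
    rcases Finset.mem_union.1 hb with h | h
    · exact Finset.mem_union_right _ (Finset.mem_image_of_mem _ h)
    · obtain ⟨c, hc, rfl⟩ := Finset.mem_image.1 h
      rw [Prod.swap_swap]
      exact Finset.mem_union_left _ hc
  rw [count_as_sum hwdr x y U W t htm, count_as_sum hwdr x y W U t htm]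
  refine Finset.sum_nbij' (i := fun b => Prod.swap b) (j := fun b => Prod.swap b)
    hswap hswap (fun b _ => by simp) (fun b _ => by simp) ?_
  intro b hb
  by_cases hbu : b.1 ∈ U ∧ b.2 ∈ W
  · rw [if_pos hbu, if_pos ⟨hbu.2, hbu.1⟩]
    exact p_comm' hwdr hcomm x y b.1 b.2
  · rw [if_neg hbu, if_neg (fun h => hbu ⟨h.2, h.1⟩)]

end Digraph

end Count

section Line

variable {S : Type*} {n : ℕ}

lemma pad_mem_lineSet (o : S) (m : ℕ) (hmd : m ≤ n + 1)
    (i : Fin (n + 1)) (hi : i.1 < m) (α : Fin n → S) (hα : α ∈ Tset S o m)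
    {u : Fin (n + 1) → S} (hu : u ∈ lineSet i α) :
    pad o (n + 1) m (fun j : Fin m => u (Fin.castLE hmd j)) = u := by
  obtain ⟨b, hb0⟩ := hu
  have hb : i.insertNth b α = u := hb0
  funext j
  unfold pad
  by_cases hj : j.1 < m
  · rw [dif_pos hj]
    congr 1
  · rw [dif_neg hj]
    have hne : j ≠ i := by
      intro h
      rw [h] at hj
      omega
    obtain ⟨k, hk⟩ := Fin.exists_succAbove_eq hne
    have hkv : (i.succAbove k).1 = k.1 ∨ (i.succAbove k).1 = k.1 + 1 := by
      unfold Fin.succAbove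
      split
      · left; rfl
      · right; rfl
    rw [hk] at hkv
    rw [← hk, ← hb, Fin.insertNth_apply_succAbove]
    exact (hα k (by omega)).symm

lemma insertNth_lineSet_apply_same {i : Fin (n + 1)} {α : Fin n → S} {u : Fin (n + 1) → S}
    {b : S} (hb : i.insertNth b α = u) : u i = b := by
  rw [← hb, Fin.insertNth_apply_same]

lemma line_pairwise_adj (Γ : Digraph (Fin (n + 1) → S)) (o : S) (m : ℕ)
    (hmd : m ≤ n + 1) (hham : (Γ.trunc o m).underlying = hammingGraph (Fin m) S)
    (i : Fin (n + 1)) (hi : i.1 < m) (α : Fin n → S) (hα : α ∈ Tset S o m)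
    {u v : Fin (n + 1) → S} (hu : u ∈ lineSet i α) (hv : v ∈ lineSet i α) (huv : u ≠ v) :
    Γ.underlying.Adj u v := by
  have hpu := pad_mem_lineSet o m hmd i hi α hα hu
  have hpv := pad_mem_lineSet o m hmd i hi α hα hv
  obtain ⟨b, hb0⟩ := hu
  obtain ⟨c, hc0⟩ := hv
  have hb : i.insertNth b α = u := hb0
  have hc : i.insertNth c α = v := hc0
  have hui : u i = b := insertNth_lineSet_apply_same hb
  have hvi : v i = c := insertNth_lineSet_apply_same hc
  have hbc : b ≠ c := by
    rintro rfl
    exact huv (hb ▸ hc ▸ rfl)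
  have hoff : ∀ j : Fin (n + 1), j ≠ i → u j = v j := by
    intro j hj
    obtain ⟨k, hk⟩ := Fin.exists_succAbove_eq hj
    rw [← hb, ← hc, ← hk, Fin.insertNth_apply_succAbove, Fin.insertNth_apply_succAbove]
  have hadj : (hammingGraph (Fin m) S).Adj (fun j : Fin m => u (Fin.castLE hmd j))
      (fun j : Fin m => v (Fin.castLE hmd j)) := by
    refine ⟨⟨i.1, hi⟩, ?_, ?_⟩
    · show u (Fin.castLE hmd ⟨i.1, hi⟩) ≠ v (Fin.castLE hmd ⟨i.1, hi⟩)
      have hce : Fin.castLE hmd ⟨i.1, hi⟩ = i := rfl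
      rw [hce, hui, hvi]
      exact hbc
    · intro j hj
      show u (Fin.castLE hmd j) = v (Fin.castLE hmd j)
      apply hoff
      intro hcon
      have hval : (j : ℕ) = i.1 := congrArg Fin.val hcon
      exact hj (Fin.ext hval)
  have hadj2 : (Γ.trunc o m).underlying.Adj (fun j : Fin m => u (Fin.castLE hmd j))
      (fun j : Fin m => v (Fin.castLE hmd j)) := by
    rw [hham]
    exact hadj
  rcases hadj2 with h | h
  · have h2 : Γ.Adj (pad o (n + 1) m fun j => u (Fin.castLE hmd j))
        (pad o (n + 1) m fun j => v (Fin.castLE hmd j)) := h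
    rw [hpu, hpv] at h2
    exact Or.inl h2
  · have h2 : Γ.Adj (pad o (n + 1) m fun j => v (Fin.castLE hmd j))
        (pad o (n + 1) m fun j => u (Fin.castLE hmd j)) := h
    rw [hpv, hpu] at h2
    exact Or.inr h2

lemma ncard_lineSet [Finite S] (i : Fin (n + 1)) (α : Fin n → S) :
    (lineSet i α).ncard = Nat.card S := by
  have hls : lineSet i α = Set.range (fun b : S => i.insertNth b α) := rfl
  rw [← Nat.card_coe_set_eq, hls]
  apply Nat.card_range_of_injective
  intro a b hab
  simpa using congrFun hab i

end Line

end Paper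

open Paper in
/-- **Proposition 3.10.** For `x,y ∈ V(Γᵢ(α))` with `(x,y) ∈ Γ_{1,p−1}`
(`p ≥ 2`), exactly one of the following holds: (i) the out- and in-degrees of
`x` and `y` in `Γᵢ(α)` coincide, and `p = 2` or
`p^{(1,p−1)}_{(2,2),(s−1,1)} = 0` for all `(1,s−1) ∈ ∂̃(Γ)`; (ii)
`d⁺(x) > d⁺(y)`, `d⁻(x) < d⁻(y)`, `p ≠ 2` and
`p^{(1,p−1)}_{(2,2),(s−1,1)} ≠ 0` for some `(1,s−1) ∈ ∂̃(Γ)`. -/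
theorem prop_degree_main {S : Type*} [Finite S] {n : ℕ}
    (Γ : Paper.Digraph (Fin (n + 1) → S)) (q : ℕ) (hq : q = Nat.card S)
    (hwdr : Γ.IsWDR) (hcomm : Γ.IsCommutative)
    (hdrg : IsDRG Γ.underlying)
    (ha1 : ∀ x y, Γ.underlying.dist x y = 1 → aNum Γ.underlying 1 x y = q - 2)
    (hc2 : ∀ x y, Γ.underlying.dist x y = 2 → cNum Γ.underlying 2 x y = 2)
    (o : S) (m : ℕ) (hm1 : 1 ≤ m) (hmd : m ≤ n + 1)
    (hham : (Γ.trunc o m).underlying = hammingGraph (Fin m) S)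
    (i : Fin (n + 1)) (hi : i.1 < m)
    (α : Fin n → S) (hα : α ∈ Tset S o m)
    (x y : Fin (n + 1) → S) (hx : x ∈ lineSet i α) (hy : y ∈ lineSet i α)
    (p : ℕ) (hp2 : 2 ≤ p) (hxy : Γ.tdist x y = (1, p - 1)) :
    ((Γ.line i α).outDeg ⟨x, hx⟩ = (Γ.line i α).outDeg ⟨y, hy⟩ ∧
      (Γ.line i α).inDeg ⟨x, hx⟩ = (Γ.line i α).inDeg ⟨y, hy⟩ ∧
      (p = 2 ∨ ∀ s : ℕ, ((1 : ℕ), s - 1) ∈ Γ.tdSet → Γ.p (1, p - 1) (2, 2) (s - 1, 1) = 0)) ∨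
    ((Γ.line i α).outDeg ⟨y, hy⟩ < (Γ.line i α).outDeg ⟨x, hx⟩ ∧
      (Γ.line i α).inDeg ⟨x, hx⟩ < (Γ.line i α).inDeg ⟨y, hy⟩ ∧
      p ≠ 2 ∧ ∃ s : ℕ, ((1 : ℕ), s - 1) ∈ Γ.tdSet ∧ Γ.p (1, p - 1) (2, 2) (s - 1, 1) ≠ 0) := by
  classical
  have hsc : Γ.StronglyConnected := hwdr.1
  have hdist1 : ∀ u v : Fin (n + 1) → S, Γ.dist u v = 1 ↔ Γ.Adj u v :=
    fun u v => Γ.dist_eq_one_iff hsc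
  have hdist0 : ∀ u v : Fin (n + 1) → S, Γ.dist u v = 0 ↔ u = v :=
    fun u v => Γ.dist_eq_zero_iff hsc
  have htdfst : ∀ u v : Fin (n + 1) → S, (Γ.tdist u v).1 = Γ.dist u v := fun _ _ => rfl
  have htdsnd : ∀ u v : Fin (n + 1) → S, (Γ.tdist u v).2 = Γ.dist v u := fun _ _ => rfl
  have hdxy : Γ.dist x y = 1 := congrArg Prod.fst hxy
  have hdyx : Γ.dist y x = p - 1 := congrArg Prod.snd hxy
  have haxy : Γ.Adj x y := (hdist1 x y).1 hdxy
  have hnexy : x ≠ y := fun h => Γ.loopless x (h ▸ haxy)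
  have hUxy : Γ.underlying.Adj x y := Or.inl haxy
  have hge2 : ∀ u v : Fin (n + 1) → S, u ≠ v → ¬ Γ.Adj u v → 2 ≤ Γ.dist u v := by
    intro u v hne hnadj
    have h0 : Γ.dist u v ≠ 0 := fun h => hne ((hdist0 u v).1 h)
    have h1 : Γ.dist u v ≠ 1 := fun h => hnadj ((hdist1 u v).1 h)
    omega
  have hnadj_of_ge2 : ∀ u v : Fin (n + 1) → S, 2 ≤ Γ.dist u v → 2 ≤ Γ.dist v u →
      ¬ Γ.underlying.Adj u v ∧ u ≠ v := by
    intro u v h1 h2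
    constructor
    · rintro (h | h)
      · have := (hdist1 u v).2 h; omega
      · have := (hdist1 v u).2 h; omega
    · rintro rfl
      rw [Γ.dist_self_s11] at h1; omega
  have hadj_of_nadj : ∀ u v : Fin (n + 1) → S, ¬ Γ.underlying.Adj u v → u ≠ v →
      2 ≤ Γ.dist u v ∧ 2 ≤ Γ.dist v u :=
    fun u v hna hne => ⟨hge2 u v hne fun h => hna (Or.inl h),
      hge2 v u (Ne.symm hne) fun h => hna (Or.inr h)⟩
  -- c2 : common neighbours of non-adjacent pairs joined by a 2-path
  have hC2 : ∀ u v : Fin (n + 1) → S, u ≠ v → ¬ Γ.underlying.Adj u v →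
      ∀ w, Γ.underlying.Adj u w → Γ.underlying.Adj w v →
      {z | Γ.underlying.Adj v z ∧ Γ.underlying.Adj u z}.ncard = 2 := by
    intro u v hne hnadj w h1 h2
    have hd2 : Γ.underlying.dist u v = 2 := by
      have hle : Γ.underlying.dist u v ≤ 2 := by
        have hw := SimpleGraph.dist_le
          (SimpleGraph.Walk.cons h1 (SimpleGraph.Walk.cons h2 SimpleGraph.Walk.nil))
        simpa using hw
      have h0 : Γ.underlying.dist u v ≠ 0 := by
        intro hh
        have hr : Γ.underlying.Reachable u v :=
          ⟨SimpleGraph.Walk.cons h1 (SimpleGraph.Walk.cons h2 SimpleGraph.Walk.nil)⟩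
        exact hne ((hr.dist_eq_zero_iff).1 hh)
      have h1' : Γ.underlying.dist u v ≠ 1 :=
        fun hh => hnadj (SimpleGraph.dist_eq_one_iff_adj.1 hh)
      omega
    have hset : {z | Γ.underlying.Adj v z ∧ Γ.underlying.Adj u z}
        = {z | Γ.underlying.Adj v z ∧ Γ.underlying.dist u z = 2 - 1} := by
      ext z
      simp only [Set.mem_setOf_eq, show (2 : ℕ) - 1 = 1 from rfl,
        SimpleGraph.dist_eq_one_iff_adj]
    rw [hset, ← Nat.card_coe_set_eq]
    exact hc2 u v hd2
  -- a1 : common neighbours of adjacent pairs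
  have hA1 : ∀ u v : Fin (n + 1) → S, Γ.underlying.Adj u v →
      {z | Γ.underlying.Adj v z ∧ Γ.underlying.Adj u z}.ncard = q - 2 := by
    intro u v hadj
    have hd1 : Γ.underlying.dist u v = 1 := SimpleGraph.dist_eq_one_iff_adj.2 hadj
    have hset : {z | Γ.underlying.Adj v z ∧ Γ.underlying.Adj u z}
        = {z | Γ.underlying.Adj v z ∧ Γ.underlying.dist u z = 1} := by
      ext z
      simp only [Set.mem_setOf_eq, SimpleGraph.dist_eq_one_iff_adj]
    rw [hset, ← Nat.card_coe_set_eq]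
    exact ha1 u v hd1
  -- clique structure of the line
  have hLadj : ∀ u v : Fin (n + 1) → S, u ∈ lineSet i α → v ∈ lineSet i α → u ≠ v →
      Γ.underlying.Adj u v :=
    fun u v hu hv huv => line_pairwise_adj Γ o m hmd hham i hi α hα hu hv huv
  have hLcard : (lineSet i α).ncard = q := by rw [ncard_lineSet, hq]
  have hLcommon : ∀ u v : Fin (n + 1) → S, u ∈ lineSet i α → v ∈ lineSet i α → u ≠ v →
      {z | Γ.underlying.Adj v z ∧ Γ.underlying.Adj u z} = lineSet i α \ {u, v} := by
    intro u v hu hv huv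
    have hsub : lineSet i α \ {u, v} ⊆ {z | Γ.underlying.Adj v z ∧ Γ.underlying.Adj u z} := by
      rintro w ⟨hw, hwne⟩
      simp only [Set.mem_insert_iff, Set.mem_singleton_iff, not_or] at hwne
      exact ⟨hLadj v w hv hw fun h => hwne.2 h.symm, hLadj u w hu hw fun h => hwne.1 h.symm⟩
    have hpairsub : ({u, v} : Set (Fin (n + 1) → S)) ⊆ lineSet i α := by
      rintro w (rfl | rfl)
      exacts [hu, hv]
    have hcard2 : (lineSet i α \ {u, v}).ncard = q - 2 := by
      rw [Set.ncard_diff hpairsub (Set.toFinite _), hLcard, Set.ncard_pair huv]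
    exact (Set.eq_of_subset_of_ncard_le hsub
      (le_of_eq ((hA1 u v (hLadj u v hu hv huv)).trans hcard2.symm)) (Set.toFinite _)).symm
  have hCl : ∀ u v : Fin (n + 1) → S, u ∈ lineSet i α → v ∈ lineSet i α → u ≠ v →
      ∀ c, Γ.underlying.Adj v c → Γ.underlying.Adj u c → c ∈ lineSet i α := by
    intro u v hu hv huv c h1 h2
    have hmem : c ∈ lineSet i α \ {u, v} := by
      rw [← hLcommon u v hu hv huv]
      exact ⟨h1, h2⟩
    exact hmem.1
  -- membership in L for neighbours
  have hnotL : ∀ z : Fin (n + 1) → S, Γ.underlying.Adj x z →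
      (z ∉ lineSet i α ↔ (¬ Γ.underlying.Adj z y ∧ z ≠ y)) := by
    intro z hxz
    constructor
    · intro hz
      constructor
      · intro hzy
        exact hz (hCl x y hx hy hnexy z hzy.symm hxz)
      · rintro rfl; exact hz hy
    · rintro ⟨hna, hne⟩ hz
      exact hna (hLadj z y hz hy hne)
  have hnotL' : ∀ z : Fin (n + 1) → S, Γ.underlying.Adj z y →
      (z ∉ lineSet i α ↔ (¬ Γ.underlying.Adj x z ∧ z ≠ x)) := by
    intro z hzy
    constructor
    · intro hz
      constructor
      · intro hxz
        exact hz (hCl x y hx hy hnexy z hzy.symm hxz)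
      · rintro rfl; exact hz hx
    · rintro ⟨hna, hne⟩ hz
      exact hna (hLadj x z hx hz (Ne.symm hne))
  -- degree identifications
  have houtdeg : ∀ (w : Fin (n + 1) → S) (hw : w ∈ lineSet i α),
      (Γ.line i α).outDeg ⟨w, hw⟩ = {z | Γ.Adj w z ∧ z ∈ lineSet i α}.ncard := by
    intro w hw
    rw [← Nat.card_coe_set_eq]
    exact Nat.card_congr ⟨fun a => ⟨a.1.1, a.2, a.1.2⟩, fun a => ⟨⟨a.1, a.2.2⟩, a.2.1⟩,
      fun a => rfl, fun a => rfl⟩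
  have hindeg : ∀ (w : Fin (n + 1) → S) (hw : w ∈ lineSet i α),
      (Γ.line i α).inDeg ⟨w, hw⟩ = {z | Γ.Adj z w ∧ z ∈ lineSet i α}.ncard := by
    intro w hw
    rw [← Nat.card_coe_set_eq]
    exact Nat.card_congr ⟨fun a => ⟨a.1.1, a.2, a.1.2⟩, fun a => ⟨⟨a.1, a.2.2⟩, a.2.1⟩,
      fun a => rfl, fun a => rfl⟩
  -- a splitting helper for ncard
  have hsplit : ∀ A B C : Set (Fin (n + 1) → S), (∀ z, z ∈ A ↔ (z ∈ B ∨ z ∈ C)) →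
      (∀ z, z ∈ B → z ∈ C → False) → A.ncard = B.ncard + C.ncard := by
    intro A B C h1 h2
    have hA : A = B ∪ C := Set.ext fun z => by rw [Set.mem_union]; exact h1 z
    rw [hA]
    exact Set.ncard_union_eq (Set.disjoint_left.2 fun {a} hb hc => h2 a hb hc)
      (Set.toFinite _) (Set.toFinite _)
  have houtsplit : ∀ u : Fin (n + 1) → S, {z | Γ.Adj u z}.ncard
      = {z | Γ.Adj u z ∧ z ∈ lineSet i α}.ncard + {z | Γ.Adj u z ∧ z ∉ lineSet i α}.ncard := by
    intro u
    exact hsplit _ _ _ (fun z => by by_cases hz : z ∈ lineSet i α <;> simp [hz])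
      (fun z hb hc => hc.2 hb.2)
  have hinsplit : ∀ u : Fin (n + 1) → S, {z | Γ.Adj z u}.ncard
      = {z | Γ.Adj z u ∧ z ∈ lineSet i α}.ncard + {z | Γ.Adj z u ∧ z ∉ lineSet i α}.ncard := by
    intro u
    exact hsplit _ _ _ (fun z => by by_cases hz : z ∈ lineSet i α <;> simp [hz])
      (fun z hb hc => hc.2 hb.2)
  -- regularity of Γ (in and out degrees are constant)
  have houtconst : {z | Γ.Adj x z}.ncard = {z | Γ.Adj y z}.ncard := by
    have hform : ∀ u : Fin (n + 1) → S, {z | Γ.Adj u z}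
        = {z | Γ.tdist u z ∈ {w : ℕ × ℕ | w.1 = 1} ∧ Γ.tdist z u ∈ (Set.univ : Set (ℕ × ℕ))} := by
      intro u
      ext z
      simp only [Set.mem_setOf_eq, Set.mem_univ, and_true]
      show Γ.Adj u z ↔ Γ.dist u z = 1
      exact (hdist1 u z).symm
    rw [hform x, hform y]
    exact Digraph.count_eq hwdr _ _ (by show ((Γ.dist x x, Γ.dist x x) : ℕ × ℕ) = (Γ.dist y y, Γ.dist y y); rw [Γ.dist_self_s11, Γ.dist_self_s11])
  have hinconst : {z | Γ.Adj z x}.ncard = {z | Γ.Adj z y}.ncard := by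
    have hform : ∀ u : Fin (n + 1) → S, {z | Γ.Adj z u}
        = {z | Γ.tdist u z ∈ {w : ℕ × ℕ | w.2 = 1} ∧ Γ.tdist z u ∈ (Set.univ : Set (ℕ × ℕ))} := by
      intro u
      ext z
      simp only [Set.mem_setOf_eq, Set.mem_univ, and_true]
      show Γ.Adj z u ↔ Γ.dist z u = 1
      exact (hdist1 z u).symm
    rw [hform x, hform y]
    exact Digraph.count_eq hwdr _ _ (by show ((Γ.dist x x, Γ.dist x x) : ℕ × ℕ) = (Γ.dist y y, Γ.dist y y); rw [Γ.dist_self_s11, Γ.dist_self_s11])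
  -- identify the out/in neighbours outside the line
  have hOx : {z | Γ.Adj x z ∧ z ∉ lineSet i α}
      = {z | Γ.tdist x z ∈ {w : ℕ × ℕ | w.1 = 1} ∧
             Γ.tdist z y ∈ {w : ℕ × ℕ | 2 ≤ w.1 ∧ 2 ≤ w.2}} := by
    ext z
    simp only [Set.mem_setOf_eq]
    constructor
    · rintro ⟨hadj, hz⟩
      obtain ⟨hna, hne⟩ := (hnotL z (Or.inl hadj)).1 hz
      obtain ⟨h1, h2⟩ := hadj_of_nadj z y hna hne
      exact ⟨(hdist1 x z).2 hadj, h1, h2⟩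
    · rintro ⟨h1, h2, h3⟩
      have hadj := (hdist1 x z).1 h1
      exact ⟨hadj, (hnotL z (Or.inl hadj)).2 (hnadj_of_ge2 z y h2 h3)⟩
  have hOy : {z | Γ.Adj y z ∧ z ∉ lineSet i α}
      = {z | Γ.tdist x z ∈ {w : ℕ × ℕ | 2 ≤ w.1 ∧ 2 ≤ w.2} ∧
             Γ.tdist z y ∈ {w : ℕ × ℕ | w.2 = 1}} := by
    ext z
    simp only [Set.mem_setOf_eq]
    constructor
    · rintro ⟨hadj, hz⟩
      obtain ⟨hna, hne⟩ := (hnotL' z (Or.inr hadj)).1 hz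
      obtain ⟨h1, h2⟩ := hadj_of_nadj x z hna (Ne.symm hne)
      exact ⟨⟨h1, h2⟩, (hdist1 y z).2 hadj⟩
    · rintro ⟨⟨h1, h2⟩, h3⟩
      have hadj := (hdist1 y z).1 h3
      refine ⟨hadj, (hnotL' z (Or.inr hadj)).2 ⟨?_, ?_⟩⟩
      · exact (hnadj_of_ge2 x z h1 h2).1
      · exact fun hh => Ne.symm ((hnadj_of_ge2 x z h1 h2).2) hh
  have hIx : {z | Γ.Adj z x ∧ z ∉ lineSet i α}
      = {z | Γ.tdist x z ∈ {w : ℕ × ℕ | w.2 = 1} ∧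
             Γ.tdist z y ∈ {w : ℕ × ℕ | 2 ≤ w.1 ∧ 2 ≤ w.2}} := by
    ext z
    simp only [Set.mem_setOf_eq]
    constructor
    · rintro ⟨hadj, hz⟩
      obtain ⟨hna, hne⟩ := (hnotL z (Or.inr hadj)).1 hz
      obtain ⟨h1, h2⟩ := hadj_of_nadj z y hna hne
      exact ⟨(hdist1 z x).2 hadj, h1, h2⟩
    · rintro ⟨h1, h2, h3⟩
      have hadj := (hdist1 z x).1 h1
      exact ⟨hadj, (hnotL z (Or.inr hadj)).2 (hnadj_of_ge2 z y h2 h3)⟩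
  have hIy : {z | Γ.Adj z y ∧ z ∉ lineSet i α}
      = {z | Γ.tdist x z ∈ {w : ℕ × ℕ | 2 ≤ w.1 ∧ 2 ≤ w.2} ∧
             Γ.tdist z y ∈ {w : ℕ × ℕ | w.1 = 1}} := by
    ext z
    simp only [Set.mem_setOf_eq]
    constructor
    · rintro ⟨hadj, hz⟩
      obtain ⟨hna, hne⟩ := (hnotL' z (Or.inl hadj)).1 hz
      obtain ⟨h1, h2⟩ := hadj_of_nadj x z hna (Ne.symm hne)
      exact ⟨⟨h1, h2⟩, (hdist1 z y).2 hadj⟩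
    · rintro ⟨⟨h1, h2⟩, h3⟩
      have hadj := (hdist1 z y).1 h3
      refine ⟨hadj, (hnotL' z (Or.inl hadj)).2 ⟨?_, ?_⟩⟩
      · exact (hnadj_of_ge2 x z h1 h2).1
      · exact fun hh => Ne.symm ((hnadj_of_ge2 x z h1 h2).2) hh
  -- splitting of arcs by the reverse distance
  have hzx_ne0 : ∀ z : Fin (n + 1) → S, Γ.dist x z = 1 → Γ.dist z x ≠ 0 := by
    intro z h1 hh
    have hzx := (hdist0 z x).1 hh
    rw [hzx, Γ.dist_self_s11] at h1
    omega
  have hxz_ne0 : ∀ z : Fin (n + 1) → S, Γ.dist z x = 1 → Γ.dist x z ≠ 0 := by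
    intro z h1 hh
    have hzx := (hdist0 x z).1 hh
    rw [← hzx, Γ.dist_self_s11] at h1
    omega
  have hzy_ne0 : ∀ z : Fin (n + 1) → S, Γ.dist y z = 1 → Γ.dist z y ≠ 0 := by
    intro z h1 hh
    have hzy := (hdist0 z y).1 hh
    rw [hzy, Γ.dist_self_s11] at h1
    omega
  have hyz_ne0 : ∀ z : Fin (n + 1) → S, Γ.dist z y = 1 → Γ.dist y z ≠ 0 := by
    intro z h1 hh
    have hzy := (hdist0 y z).1 hh
    rw [← hzy, Γ.dist_self_s11] at h1
    omega
  have hsplit1 : ∀ W : Set (ℕ × ℕ),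
      {z | Γ.tdist x z ∈ {w : ℕ × ℕ | w.1 = 1} ∧ Γ.tdist z y ∈ W}.ncard
      = {z | Γ.tdist x z ∈ {w : ℕ × ℕ | w.1 = 1 ∧ w.2 = 1} ∧ Γ.tdist z y ∈ W}.ncard
        + {z | Γ.tdist x z ∈ {w : ℕ × ℕ | w.1 = 1 ∧ 2 ≤ w.2} ∧ Γ.tdist z y ∈ W}.ncard := by
    intro W
    refine hsplit _ _ _ (fun z => ?_) (fun z hb hc => ?_)
    · constructor
      · rintro ⟨h1, h2⟩
        have h1' : Γ.dist x z = 1 := h1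
        have h0 := hzx_ne0 z h1'
        rcases Nat.lt_or_ge (Γ.dist z x) 2 with hl | hl
        · exact Or.inl ⟨⟨h1', (by omega : Γ.dist z x = 1)⟩, h2⟩
        · exact Or.inr ⟨⟨h1', hl⟩, h2⟩
      · rintro (⟨h1, h2⟩ | ⟨h1, h2⟩)
        · exact ⟨h1.1, h2⟩
        · exact ⟨h1.1, h2⟩
    · have hb1 : Γ.dist z x = 1 := hb.1.2
      have hc1 : 2 ≤ Γ.dist z x := hc.1.2
      omega
  have hsplit1' : ∀ W : Set (ℕ × ℕ),
      {z | Γ.tdist x z ∈ {w : ℕ × ℕ | w.2 = 1} ∧ Γ.tdist z y ∈ W}.ncard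
      = {z | Γ.tdist x z ∈ {w : ℕ × ℕ | w.1 = 1 ∧ w.2 = 1} ∧ Γ.tdist z y ∈ W}.ncard
        + {z | Γ.tdist x z ∈ {w : ℕ × ℕ | 2 ≤ w.1 ∧ w.2 = 1} ∧ Γ.tdist z y ∈ W}.ncard := by
    intro W
    refine hsplit _ _ _ (fun z => ?_) (fun z hb hc => ?_)
    · constructor
      · rintro ⟨h1, h2⟩
        have h1' : Γ.dist z x = 1 := h1
        have h0 := hxz_ne0 z h1'
        rcases Nat.lt_or_ge (Γ.dist x z) 2 with hl | hl
        · exact Or.inl ⟨⟨(by omega : Γ.dist x z = 1), h1'⟩, h2⟩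
        · exact Or.inr ⟨⟨hl, h1'⟩, h2⟩
      · rintro (⟨h1, h2⟩ | ⟨h1, h2⟩)
        · exact ⟨h1.2, h2⟩
        · exact ⟨h1.2, h2⟩
    · have hb1 : Γ.dist x z = 1 := hb.1.1
      have hc1 : 2 ≤ Γ.dist x z := hc.1.1
      omega
  have hsplit2 : ∀ U : Set (ℕ × ℕ),
      {z | Γ.tdist x z ∈ U ∧ Γ.tdist z y ∈ {w : ℕ × ℕ | w.2 = 1}}.ncard
      = {z | Γ.tdist x z ∈ U ∧ Γ.tdist z y ∈ {w : ℕ × ℕ | w.1 = 1 ∧ w.2 = 1}}.ncard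
        + {z | Γ.tdist x z ∈ U ∧ Γ.tdist z y ∈ {w : ℕ × ℕ | 2 ≤ w.1 ∧ w.2 = 1}}.ncard := by
    intro U
    refine hsplit _ _ _ (fun z => ?_) (fun z hb hc => ?_)
    · constructor
      · rintro ⟨h1, h2⟩
        have h2' : Γ.dist y z = 1 := h2
        have h0 := hzy_ne0 z h2'
        rcases Nat.lt_or_ge (Γ.dist z y) 2 with hl | hl
        · exact Or.inl ⟨h1, (by omega : Γ.dist z y = 1), h2'⟩
        · exact Or.inr ⟨h1, hl, h2'⟩
      · rintro (⟨h1, h2⟩ | ⟨h1, h2⟩)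
        · exact ⟨h1, h2.2⟩
        · exact ⟨h1, h2.2⟩
    · have hb1 : Γ.dist z y = 1 := hb.2.1
      have hc1 : 2 ≤ Γ.dist z y := hc.2.1
      omega
  have hsplit2' : ∀ U : Set (ℕ × ℕ),
      {z | Γ.tdist x z ∈ U ∧ Γ.tdist z y ∈ {w : ℕ × ℕ | w.1 = 1}}.ncard
      = {z | Γ.tdist x z ∈ U ∧ Γ.tdist z y ∈ {w : ℕ × ℕ | w.1 = 1 ∧ w.2 = 1}}.ncard
        + {z | Γ.tdist x z ∈ U ∧ Γ.tdist z y ∈ {w : ℕ × ℕ | w.1 = 1 ∧ 2 ≤ w.2}}.ncard := by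
    intro U
    refine hsplit _ _ _ (fun z => ?_) (fun z hb hc => ?_)
    · constructor
      · rintro ⟨h1, h2⟩
        have h2' : Γ.dist z y = 1 := h2
        have h0 := hyz_ne0 z h2'
        rcases Nat.lt_or_ge (Γ.dist y z) 2 with hl | hl
        · exact Or.inl ⟨h1, h2', (by omega : Γ.dist y z = 1)⟩
        · exact Or.inr ⟨h1, h2', hl⟩
      · rintro (⟨h1, h2⟩ | ⟨h1, h2⟩)
        · exact ⟨h1, h2.1⟩
        · exact ⟨h1, h2.1⟩
    · have hb1 : Γ.dist y z = 1 := hb.2.2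
      have hc1 : 2 ≤ Γ.dist y z := hc.2.2
      omega
  -- commutativity swaps
  have hswapB := Digraph.count_swap hwdr hcomm x y
      {w : ℕ × ℕ | 2 ≤ w.1 ∧ 2 ≤ w.2} {w : ℕ × ℕ | w.1 = 1 ∧ w.2 = 1}
  have hswapIn := Digraph.count_swap hwdr hcomm x y
      {w : ℕ × ℕ | 2 ≤ w.1 ∧ 2 ≤ w.2} {w : ℕ × ℕ | 2 ≤ w.1 ∧ w.2 = 1}
  have hswapOut := Digraph.count_swap hwdr hcomm x y
      {w : ℕ × ℕ | w.1 = 1 ∧ 2 ≤ w.2} {w : ℕ × ℕ | 2 ≤ w.1 ∧ 2 ≤ w.2}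
  -- the two degree ledgers
  have hled_out : (Γ.line i α).outDeg ⟨x, hx⟩
        + {z | Γ.tdist x z ∈ {w : ℕ × ℕ | 2 ≤ w.1 ∧ 2 ≤ w.2} ∧
               Γ.tdist z y ∈ {w : ℕ × ℕ | w.1 = 1 ∧ 2 ≤ w.2}}.ncard
      = (Γ.line i α).outDeg ⟨y, hy⟩
        + {z | Γ.tdist x z ∈ {w : ℕ × ℕ | 2 ≤ w.1 ∧ w.2 = 1} ∧
               Γ.tdist z y ∈ {w : ℕ × ℕ | 2 ≤ w.1 ∧ 2 ≤ w.2}}.ncard := by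
    have e1 := houtsplit x
    have e2 := houtsplit y
    rw [hOx, hsplit1 _] at e1
    rw [hOy, hsplit2 _] at e2
    rw [houtdeg x hx, houtdeg y hy]
    omega
  have hled_in : (Γ.line i α).inDeg ⟨x, hx⟩
        + {z | Γ.tdist x z ∈ {w : ℕ × ℕ | 2 ≤ w.1 ∧ w.2 = 1} ∧
               Γ.tdist z y ∈ {w : ℕ × ℕ | 2 ≤ w.1 ∧ 2 ≤ w.2}}.ncard
      = (Γ.line i α).inDeg ⟨y, hy⟩
        + {z | Γ.tdist x z ∈ {w : ℕ × ℕ | 2 ≤ w.1 ∧ 2 ≤ w.2} ∧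
               Γ.tdist z y ∈ {w : ℕ × ℕ | w.1 = 1 ∧ 2 ≤ w.2}}.ncard := by
    have e1 := hinsplit x
    have e2 := hinsplit y
    rw [hIx, hsplit1' _] at e1
    rw [hIy, hsplit2' _] at e2
    rw [hindeg x hx, hindeg y hy]
    omega
  by_cases hp : p = 2
  · left
    have hp1 : p - 1 = 1 := by omega
    have htd_sym : Γ.tdist x y = Γ.tdist y x := by
      show ((Γ.dist x y, Γ.dist y x) : ℕ × ℕ) = (Γ.dist y x, Γ.dist x y)
      rw [hdxy, hdyx, hp1]
    have hXY0 := Digraph.count_eq hwdr {w : ℕ × ℕ | 2 ≤ w.1 ∧ w.2 = 1}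
      {w : ℕ × ℕ | 2 ≤ w.1 ∧ 2 ≤ w.2} htd_sym
    have hset : {z | Γ.tdist y z ∈ {w : ℕ × ℕ | 2 ≤ w.1 ∧ w.2 = 1} ∧
            Γ.tdist z x ∈ {w : ℕ × ℕ | 2 ≤ w.1 ∧ 2 ≤ w.2}}
        = {z | Γ.tdist x z ∈ {w : ℕ × ℕ | 2 ≤ w.1 ∧ 2 ≤ w.2} ∧
            Γ.tdist z y ∈ {w : ℕ × ℕ | w.1 = 1 ∧ 2 ≤ w.2}} := by
      ext z
      simp only [Set.mem_setOf_eq]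
      constructor
      · rintro ⟨ha, hb⟩
        exact ⟨⟨hb.2, hb.1⟩, ha.2, ha.1⟩
      · rintro ⟨ha, hb⟩
        exact ⟨⟨hb.2, hb.1⟩, ha.2, ha.1⟩
    rw [hset] at hXY0
    exact ⟨by omega, by omega, Or.inl hp⟩
  · have hp3 : 3 ≤ p := by omega
    have hp12 : 2 ≤ p - 1 := by omega
    -- two-element set pinning
    have hpin : ∀ (s : Set (Fin (n + 1) → S)) (a b : Fin (n + 1) → S), s.ncard = 2 →
        a ∈ s → b ∈ s → a ≠ b → ∀ c ∈ s, c = a ∨ c = b := by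
      intro s a b hs ha hb hab c hc
      obtain ⟨u, v, huv, rfl⟩ := Set.ncard_eq_two.1 hs
      simp only [Set.mem_insert_iff, Set.mem_singleton_iff] at ha hb hc
      rcases ha with rfl | rfl <;> rcases hb with rfl | rfl <;> rcases hc with rfl | rfl <;> tauto
    have hother : ∀ (s : Set (Fin (n + 1) → S)) (a : Fin (n + 1) → S), s.ncard = 2 →
        a ∈ s → ∃ b, b ∈ s ∧ b ≠ a ∧ ∀ c ∈ s, c = a ∨ c = b := by
      intro s a hs ha
      obtain ⟨u, v, huv, rfl⟩ := Set.ncard_eq_two.1 hs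
      simp only [Set.mem_insert_iff, Set.mem_singleton_iff] at ha
      rcases ha with rfl | rfl
      · refine ⟨v, Or.inr rfl, Ne.symm huv, ?_⟩
        intro c hc
        simpa using hc
      · refine ⟨u, Or.inl rfl, huv, ?_⟩
        intro c hc
        simp only [Set.mem_insert_iff, Set.mem_singleton_iff] at hc
        tauto
    -- Lemma U : the canonical partner of an element of Yin
    have hLemU : ∀ z' : Fin (n + 1) → S, 2 ≤ Γ.dist x z' → 2 ≤ Γ.dist z' x →
        Γ.dist z' y = 1 → 2 ≤ Γ.dist y z' →
        ∃ u, (2 ≤ Γ.dist x u ∧ Γ.dist u x = 1) ∧ (2 ≤ Γ.dist u y ∧ 2 ≤ Γ.dist y u) ∧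
          Γ.dist u z' = 1 ∧ Γ.dist z' u = p - 1 := by
      intro z' hd1 hd2 hd3 hd4
      obtain ⟨hnaxz, hnexz⟩ := hnadj_of_ge2 x z' hd1 hd2
      have hadjz'y : Γ.Adj z' y := (hdist1 z' y).1 hd3
      have htdyz' : Γ.tdist y z' = (Γ.dist y z', 1) := by
        show ((Γ.dist y z', Γ.dist z' y) : ℕ × ℕ) = _
        rw [hd3]
      obtain ⟨t, ht1, ht2⟩ := Digraph.exists_swap_mem hwdr hcomm hxy htdyz'
      have htx : Γ.dist t x = 1 := congrArg Prod.snd ht1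
      have hxt : Γ.dist x t = Γ.dist y z' := congrArg Prod.fst ht1
      have htz' : Γ.dist t z' = 1 := congrArg Prod.fst ht2
      have hz't : Γ.dist z' t = p - 1 := congrArg Prod.snd ht2
      have htney : t ≠ y := by
        intro hh
        subst hh
        omega
      have hnauy : ¬ Γ.underlying.Adj t y := by
        intro hadj
        have htL : t ∈ lineSet i α :=
          hCl x y hx hy hnexy t hadj.symm (Or.inr ((hdist1 t x).1 htx))
        have hz'L : z' ∈ lineSet i α := hCl y t hy htL (Ne.symm htney) z'
          (Or.inl ((hdist1 t z').1 htz')) (Or.inr hadjz'y)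
        exact hnaxz (hLadj x z' hx hz'L hnexz)
      have h2uy := hadj_of_nadj t y hnauy htney
      exact ⟨t, ⟨by omega, htx⟩, ⟨h2uy.1, h2uy.2⟩, htz', hz't⟩
    -- choose the injection f
    have hLemUtot : ∀ z' : Fin (n + 1) → S,
        ∃ u, (2 ≤ Γ.dist x z' → 2 ≤ Γ.dist z' x → Γ.dist z' y = 1 → 2 ≤ Γ.dist y z' →
          (2 ≤ Γ.dist x u ∧ Γ.dist u x = 1) ∧ (2 ≤ Γ.dist u y ∧ 2 ≤ Γ.dist y u) ∧
          Γ.dist u z' = 1 ∧ Γ.dist z' u = p - 1) := by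
      intro z'
      by_cases h1 : 2 ≤ Γ.dist x z' ∧ 2 ≤ Γ.dist z' x ∧ Γ.dist z' y = 1 ∧ 2 ≤ Γ.dist y z'
      · obtain ⟨u, hu⟩ := hLemU z' h1.1 h1.2.1 h1.2.2.1 h1.2.2.2
        exact ⟨u, fun _ _ _ _ => hu⟩
      · exact ⟨z', fun a b c d => absurd ⟨a, b, c, d⟩ h1⟩
    choose f hf using hLemUtot
    have hfspec : ∀ z' : Fin (n + 1) → S,
        z' ∈ {z | Γ.tdist x z ∈ {w : ℕ × ℕ | 2 ≤ w.1 ∧ 2 ≤ w.2} ∧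
               Γ.tdist z y ∈ {w : ℕ × ℕ | w.1 = 1 ∧ 2 ≤ w.2}} →
        (2 ≤ Γ.dist x (f z') ∧ Γ.dist (f z') x = 1) ∧
          (2 ≤ Γ.dist (f z') y ∧ 2 ≤ Γ.dist y (f z')) ∧
          Γ.dist (f z') z' = 1 ∧ Γ.dist z' (f z') = p - 1 := by
      intro z' hz'
      exact hf z' hz'.1.1 hz'.1.2 hz'.2.1 hz'.2.2
    have hfmaps : ∀ z' ∈ {z | Γ.tdist x z ∈ {w : ℕ × ℕ | 2 ≤ w.1 ∧ 2 ≤ w.2} ∧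
            Γ.tdist z y ∈ {w : ℕ × ℕ | w.1 = 1 ∧ 2 ≤ w.2}},
        f z' ∈ {z | Γ.tdist x z ∈ {w : ℕ × ℕ | 2 ≤ w.1 ∧ w.2 = 1} ∧
            Γ.tdist z y ∈ {w : ℕ × ℕ | 2 ≤ w.1 ∧ 2 ≤ w.2}} := by
      intro z' hz'
      obtain ⟨h1, h2, -⟩ := hfspec z' hz'
      exact ⟨h1, h2⟩
    have hinj : Set.InjOn f {z | Γ.tdist x z ∈ {w : ℕ × ℕ | 2 ≤ w.1 ∧ 2 ≤ w.2} ∧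
        Γ.tdist z y ∈ {w : ℕ × ℕ | w.1 = 1 ∧ 2 ≤ w.2}} := by
      intro z1 hz1 z2 hz2 hfz
      obtain ⟨hu1, hu2, hu3, hu4⟩ := hfspec z1 hz1
      obtain ⟨hv1, hv2, hv3, hv4⟩ := hfspec z2 hz2
      rw [hfz] at hu1 hu2 hu3 hu4
      obtain ⟨hnayu, hneyu⟩ : ¬ Γ.underlying.Adj y (f z2) ∧ y ≠ f z2 := by
        have h := hnadj_of_ge2 (f z2) y hv2.1 hv2.2
        exact ⟨fun hh => h.1 hh.symm, Ne.symm h.2⟩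
      have hcc := hC2 y (f z2) hneyu hnayu x hUxy.symm
        (Or.inr ((hdist1 (f z2) x).1 hv1.2))
      have hxmem : x ∈ {c | Γ.underlying.Adj (f z2) c ∧ Γ.underlying.Adj y c} :=
        ⟨Or.inl ((hdist1 (f z2) x).1 hv1.2), hUxy.symm⟩
      have hz1mem : z1 ∈ {c | Γ.underlying.Adj (f z2) c ∧ Γ.underlying.Adj y c} := by
        refine ⟨Or.inl ((hdist1 (f z2) z1).1 hu3), ?_⟩
        have hz1y : Γ.dist z1 y = 1 := hz1.2.1
        exact Or.inr ((hdist1 z1 y).1 hz1y)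
      have hz2mem : z2 ∈ {c | Γ.underlying.Adj (f z2) c ∧ Γ.underlying.Adj y c} := by
        refine ⟨Or.inl ((hdist1 (f z2) z2).1 hv3), ?_⟩
        have hz2y : Γ.dist z2 y = 1 := hz2.2.1
        exact Or.inr ((hdist1 z2 y).1 hz2y)
      have hz1nex : z1 ≠ x := by
        intro hh
        have h2d : 2 ≤ Γ.dist x z1 := hz1.1.1
        rw [hh, Γ.dist_self_s11] at h2d
        omega
      have hz2nex : z2 ≠ x := by
        intro hh
        have h2d : 2 ≤ Γ.dist x z2 := hz2.1.1
        rw [hh, Γ.dist_self_s11] at h2d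
        omega
      rcases hpin _ x z1 hcc hxmem hz1mem (Ne.symm hz1nex) z2 hz2mem with rfl | rfl
      · exact absurd rfl hz2nex
      · rfl
    by_cases hZ : ∀ s : ℕ, ((1 : ℕ), s - 1) ∈ Γ.tdSet → Γ.p (1, p - 1) (2, 2) (s - 1, 1) = 0
    · left
      have hXY : {z | Γ.tdist x z ∈ {w : ℕ × ℕ | 2 ≤ w.1 ∧ w.2 = 1} ∧
              Γ.tdist z y ∈ {w : ℕ × ℕ | 2 ≤ w.1 ∧ 2 ≤ w.2}}.ncard
          = {z | Γ.tdist x z ∈ {w : ℕ × ℕ | 2 ≤ w.1 ∧ 2 ≤ w.2} ∧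
              Γ.tdist z y ∈ {w : ℕ × ℕ | w.1 = 1 ∧ 2 ≤ w.2}}.ncard := by
        have hLemR : ∀ z : Fin (n + 1) → S, 2 ≤ Γ.dist x z → Γ.dist z x = 1 →
            2 ≤ Γ.dist z y → 2 ≤ Γ.dist y z →
            ∃ r, (2 ≤ Γ.dist x r ∧ 2 ≤ Γ.dist r x) ∧ (Γ.dist r y = 1 ∧ 2 ≤ Γ.dist y r) ∧
              Γ.underlying.Adj r z := by
          intro z ha1' hzx1 hzy2 hyz2
          have hadjzx : Γ.Adj z x := (hdist1 z x).1 hzx1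
          obtain ⟨hnazy, hnezy⟩ := hnadj_of_ge2 z y hzy2 hyz2
          have hdy3 : 3 ≤ Γ.dist y z := by
            by_contra hdy
            push_neg at hdy
            have hdyz : Γ.dist y z = 2 := by omega
            have hdzy : Γ.dist z y = 2 := by
              have hle := Γ.dist_le_two_s11 hadjzx haxy
              omega
            have hmemP : z ∈ Γ.P (Γ.tdist x z) (2, 2) x y :=
              ⟨rfl, by show ((Γ.dist z y, Γ.dist y z) : ℕ × ℕ) = (2, 2); rw [hdzy, hdyz]⟩
            have hpos : 0 < (Γ.P (Γ.tdist x z) (2, 2) x y).ncard :=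
              (Set.ncard_pos (Set.toFinite _)).2 ⟨z, hmemP⟩
            rw [Digraph.ncard_P hwdr, Digraph.p_comm' hwdr hcomm] at hpos
            have htdxz : Γ.tdist x z = (Γ.dist x z + 1 - 1, 1) := by
              show ((Γ.dist x z, Γ.dist z x) : ℕ × ℕ) = _
              have hcan2 : Γ.dist x z + 1 - 1 = Γ.dist x z := by omega
              rw [hzx1, hcan2]
            have hmemtd : ((1 : ℕ), Γ.dist x z + 1 - 1) ∈ Γ.tdSet := by
              refine ⟨z, x, ?_⟩
              show ((Γ.dist z x, Γ.dist x z) : ℕ × ℕ) = _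
              have hcan : Γ.dist x z + 1 - 1 = Γ.dist x z := by omega
              rw [hzx1, hcan]
            have hZ' := hZ (Γ.dist x z + 1) hmemtd
            rw [hxy, htdxz] at hpos
            omega
          have hcc := hC2 y z (Ne.symm hnezy) (fun hh => hnazy hh.symm) x hUxy.symm
            (Or.inr hadjzx)
          have hxmem : x ∈ {c | Γ.underlying.Adj z c ∧ Γ.underlying.Adj y c} :=
            ⟨Or.inl hadjzx, hUxy.symm⟩
          obtain ⟨r, hrC, hrnex, -⟩ := hother _ x hcc hxmem
          have hrz : Γ.underlying.Adj z r := hrC.1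
          have hry : Γ.underlying.Adj y r := hrC.2
          have hnaxr : ¬ Γ.underlying.Adj x r := by
            intro hadj
            have hrL : r ∈ lineSet i α := hCl x y hx hy hnexy r hry hadj
            have hzL : z ∈ lineSet i α := hCl x r hx hrL (Ne.symm hrnex) z hrz.symm
              (Or.inr hadjzx)
            exact hnazy (hLadj z y hzL hy hnezy)
          have hnyr : ¬ Γ.Adj y r := by
            intro hyr
            have hnrz : ¬ Γ.Adj r z := by
              intro hrz'
              have := Γ.dist_le_two_s11 hyr hrz'
              omega
            have hzr : Γ.Adj z r := by
              rcases hrz with h | h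
              · exact h
              · exact absurd h hnrz
            have hge2rz : 2 ≤ Γ.dist r z := hge2 r z (Ne.symm hrz.ne) hnrz
            have htd1 : Γ.tdist x z = (Γ.dist x z, 1) := by
              show ((Γ.dist x z, Γ.dist z x) : ℕ × ℕ) = _
              rw [hzx1]
            have htd2 : Γ.tdist z r = (1, Γ.dist r z) := by
              show ((Γ.dist z r, Γ.dist r z) : ℕ × ℕ) = _
              rw [(hdist1 z r).2 hzr]
            obtain ⟨t, ht1, ht2⟩ := Digraph.exists_swap_mem hwdr hcomm htd1 htd2
            have hxt : Γ.dist x t = 1 := congrArg Prod.fst ht1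
            have hrt : Γ.dist r t = 1 := congrArg Prod.snd ht2
            have htr : Γ.dist t r = Γ.dist x z := congrArg Prod.fst ht2
            have hccxr := hC2 x r (Ne.symm hrnex) hnaxr y hUxy hry
            have hymem2 : y ∈ {c | Γ.underlying.Adj r c ∧ Γ.underlying.Adj x c} :=
              ⟨hry.symm, hUxy⟩
            have hzmem2 : z ∈ {c | Γ.underlying.Adj r c ∧ Γ.underlying.Adj x c} :=
              ⟨hrz.symm, Or.inr hadjzx⟩
            have htmem2 : t ∈ {c | Γ.underlying.Adj r c ∧ Γ.underlying.Adj x c} :=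
              ⟨Or.inl ((hdist1 r t).1 hrt), Or.inl ((hdist1 x t).1 hxt)⟩
            have hyz' : y ≠ z := Ne.symm hnezy
            rcases hpin _ y z hccxr hymem2 hzmem2 hyz' t htmem2 with rfl | rfl
            · have h1 := (hdist1 t r).2 hyr
              omega
            · have h1 := (hdist1 t r).2 hzr
              omega
          have hryΓ : Γ.Adj r y := by
            rcases hry with h | h
            · exact absurd h hnyr
            · exact h
          have hge2yr : 2 ≤ Γ.dist y r := hge2 y r hry.ne hnyr
          obtain ⟨h1, h2⟩ := hadj_of_nadj x r hnaxr (Ne.symm hrnex)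
          exact ⟨r, ⟨h1, h2⟩, ⟨(hdist1 r y).2 hryΓ, hge2yr⟩, hrz.symm⟩
        have hLemRtot : ∀ z : Fin (n + 1) → S, ∃ r,
            (2 ≤ Γ.dist x z → Γ.dist z x = 1 → 2 ≤ Γ.dist z y → 2 ≤ Γ.dist y z →
              (2 ≤ Γ.dist x r ∧ 2 ≤ Γ.dist r x) ∧ (Γ.dist r y = 1 ∧ 2 ≤ Γ.dist y r) ∧
                Γ.underlying.Adj r z) := by
          intro z
          by_cases h1 : 2 ≤ Γ.dist x z ∧ Γ.dist z x = 1 ∧ 2 ≤ Γ.dist z y ∧ 2 ≤ Γ.dist y z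
          · obtain ⟨r, hr⟩ := hLemR z h1.1 h1.2.1 h1.2.2.1 h1.2.2.2
            exact ⟨r, fun _ _ _ _ => hr⟩
          · exact ⟨z, fun a b c d => absurd ⟨a, b, c, d⟩ h1⟩
        choose g hg using hLemRtot
        have hgspec : ∀ z ∈ {z | Γ.tdist x z ∈ {w : ℕ × ℕ | 2 ≤ w.1 ∧ w.2 = 1} ∧
              Γ.tdist z y ∈ {w : ℕ × ℕ | 2 ≤ w.1 ∧ 2 ≤ w.2}},
            (2 ≤ Γ.dist x (g z) ∧ 2 ≤ Γ.dist (g z) x) ∧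
              (Γ.dist (g z) y = 1 ∧ 2 ≤ Γ.dist y (g z)) ∧ Γ.underlying.Adj (g z) z := by
          intro z hz
          exact hg z hz.1.1 hz.1.2 hz.2.1 hz.2.2
        have hgmaps : ∀ z ∈ {z | Γ.tdist x z ∈ {w : ℕ × ℕ | 2 ≤ w.1 ∧ w.2 = 1} ∧
              Γ.tdist z y ∈ {w : ℕ × ℕ | 2 ≤ w.1 ∧ 2 ≤ w.2}},
            g z ∈ {z | Γ.tdist x z ∈ {w : ℕ × ℕ | 2 ≤ w.1 ∧ 2 ≤ w.2} ∧
              Γ.tdist z y ∈ {w : ℕ × ℕ | w.1 = 1 ∧ 2 ≤ w.2}} := by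
          intro z hz
          obtain ⟨h1, h2, -⟩ := hgspec z hz
          exact ⟨h1, h2⟩
        have hginj : Set.InjOn g {z | Γ.tdist x z ∈ {w : ℕ × ℕ | 2 ≤ w.1 ∧ w.2 = 1} ∧
            Γ.tdist z y ∈ {w : ℕ × ℕ | 2 ≤ w.1 ∧ 2 ≤ w.2}} := by
          intro z1 hz1 z2 hz2 hgz
          obtain ⟨hr1, hr2, hr3⟩ := hgspec z1 hz1
          obtain ⟨hs1, hs2, hs3⟩ := hgspec z2 hz2
          rw [hgz] at hr1 hr2 hr3
          obtain ⟨hnaxr, hnexr⟩ := hnadj_of_ge2 x (g z2) hr1.1 hr1.2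
          have hadjygz : Γ.underlying.Adj y (g z2) := Or.inr ((hdist1 (g z2) y).1 hr2.1)
          have hcc := hC2 x (g z2) hnexr hnaxr y hUxy hadjygz
          have hymem : y ∈ {c | Γ.underlying.Adj (g z2) c ∧ Γ.underlying.Adj x c} :=
            ⟨hadjygz.symm, hUxy⟩
          have hz1mem : z1 ∈ {c | Γ.underlying.Adj (g z2) c ∧ Γ.underlying.Adj x c} := by
            refine ⟨hr3, ?_⟩
            have hz1x : Γ.dist z1 x = 1 := hz1.1.2
            exact Or.inr ((hdist1 z1 x).1 hz1x)
          have hz2mem : z2 ∈ {c | Γ.underlying.Adj (g z2) c ∧ Γ.underlying.Adj x c} := by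
            refine ⟨hs3, ?_⟩
            have hz2x : Γ.dist z2 x = 1 := hz2.1.2
            exact Or.inr ((hdist1 z2 x).1 hz2x)
          have hz1ney : z1 ≠ y := by
            intro hh
            have h2d : 2 ≤ Γ.dist z1 y := hz1.2.1
            rw [hh, Γ.dist_self_s11] at h2d
            omega
          have hz2ney : z2 ≠ y := by
            intro hh
            have h2d : 2 ≤ Γ.dist z2 y := hz2.2.1
            rw [hh, Γ.dist_self_s11] at h2d
            omega
          rcases hpin _ y z1 hcc hymem hz1mem (Ne.symm hz1ney) z2 hz2mem with rfl | rfl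
          · exact absurd rfl hz2ney
          · rfl
        have hle1 := Set.ncard_le_ncard_of_injOn f hfmaps hinj (Set.toFinite _)
        have hle2 := Set.ncard_le_ncard_of_injOn g hgmaps hginj (Set.toFinite _)
        omega
      exact ⟨by omega, by omega, Or.inr hZ⟩
    · right
      push_neg at hZ
      obtain ⟨s₀, hs₀m, hs₀⟩ := hZ
      have hXY : {z | Γ.tdist x z ∈ {w : ℕ × ℕ | 2 ≤ w.1 ∧ 2 ≤ w.2} ∧
              Γ.tdist z y ∈ {w : ℕ × ℕ | w.1 = 1 ∧ 2 ≤ w.2}}.ncard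
          < {z | Γ.tdist x z ∈ {w : ℕ × ℕ | 2 ≤ w.1 ∧ w.2 = 1} ∧
              Γ.tdist z y ∈ {w : ℕ × ℕ | 2 ≤ w.1 ∧ 2 ≤ w.2}}.ncard := by
        have hpos : 0 < (Γ.P (2, 2) (s₀ - 1, 1) x y).ncard := by
          rw [Digraph.ncard_P hwdr, hxy]
          omega
        obtain ⟨w₀, hw₀1, hw₀2⟩ := (Set.ncard_pos (Set.toFinite _)).1 hpos
        have hdxw : Γ.dist x w₀ = 2 := congrArg Prod.fst hw₀1
        have hdwx : Γ.dist w₀ x = 2 := congrArg Prod.snd hw₀1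
        have hdyw : Γ.dist y w₀ = 1 := congrArg Prod.snd hw₀2
        have hadjyw : Γ.Adj y w₀ := (hdist1 y w₀).1 hdyw
        obtain ⟨hnaxw, hnexw⟩ := hnadj_of_ge2 x w₀ (by omega) (by omega)
        obtain ⟨c, hc1, hc2'⟩ := Γ.exists_mid_s11 hsc hdwx
        have hcc := hC2 x w₀ hnexw hnaxw y hUxy (Or.inl hadjyw)
        have hymem : y ∈ {z | Γ.underlying.Adj w₀ z ∧ Γ.underlying.Adj x z} :=
          ⟨Or.inr hadjyw, hUxy⟩
        obtain ⟨v, hvC, hvney, hallv⟩ := hother _ y hcc hymem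
        have hcmem : c ∈ {z | Γ.underlying.Adj w₀ z ∧ Γ.underlying.Adj x z} :=
          ⟨Or.inl hc1, Or.inr hc2'⟩
        have hcv : c = v := by
          rcases hallv c hcmem with h | h
          · exfalso
            rw [h] at hc2'
            have := (hdist1 y x).2 hc2'
            omega
          · exact h
        have hwv : Γ.Adj w₀ v := by rw [← hcv]; exact hc1
        have hvx : Γ.Adj v x := by rw [← hcv]; exact hc2'
        have hvnay : ¬ Γ.underlying.Adj v y := by
          intro hadj
          have hvL : v ∈ lineSet i α := hCl x y hx hy hnexy v hadj.symm hvC.2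
          have hwL : w₀ ∈ lineSet i α := hCl y v hy hvL (Ne.symm hvney) w₀
            (Or.inr hwv) (Or.inl hadjyw)
          exact hnaxw (hLadj x w₀ hx hwL hnexw)
        have hnxv : ¬ Γ.Adj x v := by
          intro hxv
          have htdvx : Γ.tdist v x = (1, 1) := by
            show ((Γ.dist v x, Γ.dist x v) : ℕ × ℕ) = _
            rw [(hdist1 v x).2 hvx, (hdist1 x v).2 hxv]
          obtain ⟨t, ht1, ht2⟩ := Digraph.exists_swap_mem hwdr hcomm htdvx hxy
          have hvt : Γ.dist v t = 1 := congrArg Prod.fst ht1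
          have htv : Γ.dist t v = p - 1 := congrArg Prod.snd ht1
          have hty : Γ.dist t y = 1 := congrArg Prod.fst ht2
          have hccyv := hC2 y v (Ne.symm hvney) (fun hh => hvnay hh.symm) x hUxy.symm
            (Or.inl hxv)
          have hxmem2 : x ∈ {z | Γ.underlying.Adj v z ∧ Γ.underlying.Adj y z} :=
            ⟨Or.inl hvx, hUxy.symm⟩
          have hwmem2 : w₀ ∈ {z | Γ.underlying.Adj v z ∧ Γ.underlying.Adj y z} :=
            ⟨Or.inr hwv, Or.inl hadjyw⟩
          have htmem2 : t ∈ {z | Γ.underlying.Adj v z ∧ Γ.underlying.Adj y z} :=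
            ⟨Or.inl ((hdist1 v t).1 hvt), Or.inr ((hdist1 t y).1 hty)⟩
          rcases hpin _ x w₀ hccyv hxmem2 hwmem2 hnexw t htmem2 with rfl | rfl
          · have h1 := (hdist1 t v).2 hxv
            omega
          · have h1 := (hdist1 t v).2 hwv
            omega
        have hnexv : x ≠ v := by
          intro hh
          exact Γ.loopless x (hh ▸ hvx)
        have hvXmem : v ∈ {z | Γ.tdist x z ∈ {w : ℕ × ℕ | 2 ≤ w.1 ∧ w.2 = 1} ∧
            Γ.tdist z y ∈ {w : ℕ × ℕ | 2 ≤ w.1 ∧ 2 ≤ w.2}} :=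
          ⟨⟨hge2 x v hnexv hnxv, (hdist1 v x).2 hvx⟩, hadj_of_nadj v y hvnay hvney⟩
        have hfne : ∀ z' ∈ {z | Γ.tdist x z ∈ {w : ℕ × ℕ | 2 ≤ w.1 ∧ 2 ≤ w.2} ∧
            Γ.tdist z y ∈ {w : ℕ × ℕ | w.1 = 1 ∧ 2 ≤ w.2}}, f z' ≠ v := by
          intro z' hz' hfv
          obtain ⟨hu1, hu2, hu3, hu4⟩ := hfspec z' hz'
          rw [hfv] at hu1 hu2 hu3 hu4
          have hccyv := hC2 y v (Ne.symm hvney) (fun hh => hvnay hh.symm) x hUxy.symm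
            (Or.inr hvx)
          have hxmem2 : x ∈ {z | Γ.underlying.Adj v z ∧ Γ.underlying.Adj y z} :=
            ⟨Or.inl hvx, hUxy.symm⟩
          have hwmem2 : w₀ ∈ {z | Γ.underlying.Adj v z ∧ Γ.underlying.Adj y z} :=
            ⟨Or.inr hwv, Or.inl hadjyw⟩
          have hz'mem : z' ∈ {z | Γ.underlying.Adj v z ∧ Γ.underlying.Adj y z} := by
            refine ⟨Or.inl ((hdist1 v z').1 hu3), ?_⟩
            have hz'y : Γ.dist z' y = 1 := hz'.2.1
            exact Or.inr ((hdist1 z' y).1 hz'y)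
          have hz'nex : z' ≠ x := by
            intro hh
            have h2d : 2 ≤ Γ.dist x z' := hz'.1.1
            rw [hh, Γ.dist_self_s11] at h2d
            omega
          rcases hpin _ x w₀ hccyv hxmem2 hwmem2 hnexw z' hz'mem with rfl | rfl
          · exact hz'nex rfl
          · have h1 := (hdist1 z' v).2 hwv
            omega
        have hfmaps' : ∀ z' ∈ {z | Γ.tdist x z ∈ {w : ℕ × ℕ | 2 ≤ w.1 ∧ 2 ≤ w.2} ∧
              Γ.tdist z y ∈ {w : ℕ × ℕ | w.1 = 1 ∧ 2 ≤ w.2}},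
            f z' ∈ {z | Γ.tdist x z ∈ {w : ℕ × ℕ | 2 ≤ w.1 ∧ w.2 = 1} ∧
              Γ.tdist z y ∈ {w : ℕ × ℕ | 2 ≤ w.1 ∧ 2 ≤ w.2}} \ {v} :=
          fun z' hz' => ⟨hfmaps z' hz', fun hh => hfne z' hz' hh⟩
        have hle := Set.ncard_le_ncard_of_injOn f hfmaps' hinj (Set.toFinite _)
        have hdiff := Set.ncard_diff_singleton_add_one hvXmem (Set.toFinite _)
        omega
      exact ⟨by omega, by omega, hp, s₀, hs₀m, hs₀⟩
end
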